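/- arXiv:1510.04560 — 4 statements merged into one kernel-verified Lean document; each statement's English description precedes it below -/
import Mathlib

section
/- Let X be a complex Banach space which does not contain a copy of c₀, let T be a bounded linear operator on X satisfying the unconditional Ritt condition, and let P be a bounded linear projection on X (P² = P) with range Fix(T) = ker(I − T) and kernel equal to the closure of the range of I − T. If the range of I − T is closed, then there exist constants C > 0 and r ∈ [0, 1) such that ‖T^n − P‖ ≤ C rⁿ for all n ≥ 0. -/
open Filter Topology
open scoped ENNReal NNReal

set_option maxHeartbeats 1000000

/-- The unconditional Ritt condition for a bounded operator on a complex Banach space. -/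
def UncondRitt {X : Type*} [NormedAddCommGroup X] [NormedSpace ℂ X]
    (T : X →L[ℂ] X) : Prop :=
  ∃ C : ℝ, 0 < C ∧ ∀ (n : ℕ) (a : ℕ → ℂ),
    ‖∑ k ∈ Finset.range (n + 1), a k • (T ^ k * (1 - T))‖ ≤
      C * (Finset.range (n + 1)).sup' Finset.nonempty_range_add_one (fun k => ‖a k‖)

/-- A complex Banach space `X` contains a copy of `c₀` if some closed subspace of `X`
is isomorphic, via a continuous linear equivalence, to the space `c₀ = C₀(ℕ, ℂ)` of
complex sequences tending to zero with the supremum norm. -/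
def ContainsCopyOfC0 (X : Type*) [NormedAddCommGroup X] [NormedSpace ℂ X] : Prop :=
  ∃ Y : Submodule ℂ X, IsClosed (Y : Set X) ∧
    Nonempty (Y ≃L[ℂ] ZeroAtInftyContinuousMap ℕ ℂ)

section myAux
variable {X : Type*} [NormedAddCommGroup X] [NormedSpace ℂ X] [CompleteSpace X]

section basic
variable {T : X →L[ℂ] X} {C : ℝ}

/-- norm bound for individual terms -/
lemma myTermBound (hC : 0 < C)
    (h : ∀ (n : ℕ) (a : ℕ → ℂ),
      ‖∑ k ∈ Finset.range (n + 1), a k • (T ^ k * (1 - T))‖ ≤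
        C * (Finset.range (n + 1)).sup' Finset.nonempty_range_add_one (fun k => ‖a k‖))
    (k : ℕ) : ‖T ^ k * (1 - T)‖ ≤ C := by
  have h1 := h k (fun j => if j = k then 1 else 0)
  have h2 : ∑ j ∈ Finset.range (k + 1), (if j = k then (1:ℂ) else 0) • (T ^ j * (1 - T))
      = T ^ k * (1 - T) := by
    rw [Finset.sum_eq_single_of_mem k (Finset.self_mem_range_succ k)]
    · simp
    · intro b _ hb; simp [hb]
  have h3 : (Finset.range (k + 1)).sup' Finset.nonempty_range_add_one
      (fun j => ‖if j = k then (1:ℂ) else 0‖) ≤ 1 := by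
    apply Finset.sup'_le
    intro j _
    split <;> simp
  rw [h2] at h1
  calc ‖T ^ k * (1 - T)‖ ≤ C * _ := h1
    _ ≤ C * 1 := by gcongr
    _ = C := mul_one C

lemma myOneSubPowBound (hC : 0 < C)
    (h : ∀ (n : ℕ) (a : ℕ → ℂ),
      ‖∑ k ∈ Finset.range (n + 1), a k • (T ^ k * (1 - T))‖ ≤
        C * (Finset.range (n + 1)).sup' Finset.nonempty_range_add_one (fun k => ‖a k‖))
    (n : ℕ) : ‖(1 : X →L[ℂ] X) - T ^ (n + 1)‖ ≤ C := by
  have h1 := h n (fun _ => (1:ℂ))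
  have h2 : ∑ k ∈ Finset.range (n + 1), (1:ℂ) • (T ^ k * (1 - T))
      = (1 : X →L[ℂ] X) - T ^ (n + 1) := by
    have : ∀ k, (1:ℂ) • (T ^ k * (1 - T)) = T ^ k - T ^ (k + 1) := by
      intro k
      rw [one_smul, mul_sub, mul_one, ← pow_succ]
    simp_rw [this]
    rw [Finset.sum_range_sub' (fun k => T ^ k)]
    simp
  rw [h2] at h1
  simpa using h1

lemma myPowBound (hC : 0 < C)
    (h : ∀ (n : ℕ) (a : ℕ → ℂ),
      ‖∑ k ∈ Finset.range (n + 1), a k • (T ^ k * (1 - T))‖ ≤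
        C * (Finset.range (n + 1)).sup' Finset.nonempty_range_add_one (fun k => ‖a k‖))
    (n : ℕ) : ‖T ^ n‖ ≤ 1 + C := by
  cases n with
  | zero =>
    simp only [pow_zero]
    have : ‖(1 : X →L[ℂ] X)‖ ≤ 1 := ContinuousLinearMap.norm_id_le
    linarith
  | succ n =>
    have h1 := myOneSubPowBound hC h n
    calc ‖T ^ (n+1)‖ = ‖(1 : X →L[ℂ] X) - ((1 : X →L[ℂ] X) - T ^ (n+1))‖ := by
          rw [sub_sub_cancel]
      _ ≤ ‖(1 : X →L[ℂ] X)‖ + ‖(1 : X →L[ℂ] X) - T ^ (n+1)‖ := norm_sub_le _ _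
      _ ≤ 1 + C := add_le_add ContinuousLinearMap.norm_id_le h1

lemma myGeomId (T : X →L[ℂ] X) {z : ℂ} (hz : z ≠ 0) (n : ℕ) :
    (z • (1 : X →L[ℂ] X) - T) * (∑ k ∈ Finset.range n, (z⁻¹) ^ (k + 1) • T ^ k)
      = 1 - (z⁻¹) ^ n • T ^ n := by
  induction n with
  | zero => simp
  | succ n ih =>
    rw [Finset.sum_range_succ, mul_add, ih]
    have key : (z • (1 : X →L[ℂ] X) - T) * ((z⁻¹) ^ (n + 1) • T ^ n)
        = (z⁻¹) ^ n • T ^ n - (z⁻¹) ^ (n + 1) • T ^ (n + 1) := by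
      rw [sub_mul, smul_mul_assoc, one_mul, mul_smul_comm, smul_smul, ← pow_succ']
      congr 2
      rw [pow_succ']
      rw [← mul_assoc, mul_inv_cancel₀ hz, one_mul]
    rw [key]
    abel

end basic

section nontriv
variable [Nontrivial X] {T : X →L[ℂ] X} {C : ℝ}

lemma mySpecDisk (hC : 0 < C)
    (h : ∀ (n : ℕ) (a : ℕ → ℂ),
      ‖∑ k ∈ Finset.range (n + 1), a k • (T ^ k * (1 - T))‖ ≤
        C * (Finset.range (n + 1)).sup' Finset.nonempty_range_add_one (fun k => ‖a k‖))
    {z : ℂ} (hz : 1 < ‖z‖) : z ∉ spectrum ℂ T := by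
  intro hmem
  have hpow : ∀ n : ℕ, z ^ n ∈ spectrum ℂ (T ^ n) := by
    intro n
    have := spectrum.subset_polynomial_aeval T (Polynomial.X ^ n : Polynomial ℂ)
    have hx : z ^ n ∈ (fun k => Polynomial.eval k ((Polynomial.X : Polynomial ℂ) ^ n)) ''
        spectrum ℂ T := ⟨z, hmem, by simp⟩
    have := this hx
    simpa using this
  have hb : ∀ n : ℕ, ‖z‖ ^ n ≤ 1 + C := by
    intro n
    calc ‖z‖ ^ n = ‖z ^ n‖ := (norm_pow z n).symm
      _ ≤ ‖T ^ n‖ := spectrum.norm_le_norm_of_mem (hpow n)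
      _ ≤ 1 + C := myPowBound hC h n
  obtain ⟨n, hn⟩ := ((tendsto_pow_atTop_atTop_of_one_lt hz).eventually_gt_atTop (1 + C)).exists
  exact absurd (hb n) (not_le.mpr hn)

lemma myResolventBound (hC : 0 < C)
    (h : ∀ (n : ℕ) (a : ℕ → ℂ),
      ‖∑ k ∈ Finset.range (n + 1), a k • (T ^ k * (1 - T))‖ ≤
        C * (Finset.range (n + 1)).sup' Finset.nonempty_range_add_one (fun k => ‖a k‖))
    {z : ℂ} (hz : 1 < ‖z‖) :
    ∃ u : (X →L[ℂ] X)ˣ, (u : X →L[ℂ] X) = z • 1 - T ∧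
      ‖((u⁻¹ : (X →L[ℂ] X)ˣ) : X →L[ℂ] X)‖ ≤ (1 + C) / ‖z - 1‖ := by
  have hz0 : z ≠ 0 := by
    intro h0; rw [h0] at hz; simp at hz; linarith
  have hz1 : z ≠ 1 := by
    intro h1; rw [h1] at hz; simp at hz
  have hiu : IsUnit (z • (1 : X →L[ℂ] X) - T) := by
    have := mySpecDisk hC h hz
    rw [spectrum.notMem_iff] at this
    rwa [Algebra.algebraMap_eq_smul_one] at this
  obtain ⟨u, hu⟩ := hiu
  refine ⟨u, hu, ?_⟩
  set R : X →L[ℂ] X := ((u⁻¹ : (X →L[ℂ] X)ˣ) : X →L[ℂ] X) with hR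
  have hRu : R * (z • (1 : X →L[ℂ] X) - T) = 1 := by
    rw [← hu]; exact u.inv_mul
  have huR : (z • (1 : X →L[ℂ] X) - T) * R = 1 := by
    rw [← hu]; exact u.mul_inv
  -- partial sums identity
  have hsum : ∀ n : ℕ, ∑ k ∈ Finset.range n, (z⁻¹) ^ (k + 1) • T ^ k
      = R - (z⁻¹) ^ n • (R * T ^ n) := by
    intro n
    have h1 : R * ((z • (1 : X →L[ℂ] X) - T) *
        (∑ k ∈ Finset.range n, (z⁻¹) ^ (k + 1) • T ^ k))
        = ∑ k ∈ Finset.range n, (z⁻¹) ^ (k + 1) • T ^ k := by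
      rw [← mul_assoc, hRu, one_mul]
    rw [myGeomId T hz0 n] at h1
    rw [← h1, mul_sub, mul_one, mul_smul_comm]
  -- bound on ‖R * (1 - T)‖
  have hRT : ‖R * (1 - T)‖ ≤ C := by
    have hzinv : ‖z⁻¹‖ < 1 := by
      rw [norm_inv]
      rw [inv_lt_one_iff₀]
      right; exact hz
    have key : ∀ n : ℕ, ‖R * (1 - T)‖ ≤ C + ‖z⁻¹‖ ^ (n + 1) * (‖R‖ * C) := by
      intro n
      have e1 : (∑ k ∈ Finset.range (n + 1), (z⁻¹) ^ (k + 1) • T ^ k) * (1 - T)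
          = R * (1 - T) - (z⁻¹) ^ (n + 1) • (R * (T ^ (n + 1) * (1 - T))) := by
        rw [hsum (n + 1), sub_mul, smul_mul_assoc, mul_assoc]
      have e2 : (∑ k ∈ Finset.range (n + 1), (z⁻¹) ^ (k + 1) • T ^ k) * (1 - T)
          = ∑ k ∈ Finset.range (n + 1), (z⁻¹) ^ (k + 1) • (T ^ k * (1 - T)) := by
        rw [Finset.sum_mul]
        simp_rw [smul_mul_assoc]
      have e3 : R * (1 - T) = (∑ k ∈ Finset.range (n + 1), (z⁻¹) ^ (k + 1) • (T ^ k * (1 - T)))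
          + (z⁻¹) ^ (n + 1) • (R * (T ^ (n + 1) * (1 - T))) := by
        rw [← e2, e1]; abel
      have hq : ‖∑ k ∈ Finset.range (n + 1), (z⁻¹) ^ (k + 1) • (T ^ k * (1 - T))‖ ≤ C := by
        have h1 := h n (fun k => (z⁻¹) ^ (k + 1))
        have h3 : (Finset.range (n + 1)).sup' Finset.nonempty_range_add_one
            (fun k => ‖(z⁻¹) ^ (k + 1)‖) ≤ 1 := by
          apply Finset.sup'_le
          intro j _
          rw [norm_pow]
          exact pow_le_one₀ (norm_nonneg _) hzinv.le
        calc ‖∑ k ∈ Finset.range (n + 1), (z⁻¹) ^ (k + 1) • (T ^ k * (1 - T))‖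
            ≤ C * _ := h1
          _ ≤ C * 1 := by gcongr
          _ = C := mul_one C
      calc ‖R * (1 - T)‖ ≤ ‖∑ k ∈ Finset.range (n + 1), (z⁻¹) ^ (k + 1) • (T ^ k * (1 - T))‖
            + ‖(z⁻¹) ^ (n + 1) • (R * (T ^ (n + 1) * (1 - T)))‖ := by
            rw [e3]; exact norm_add_le _ _
        _ ≤ C + ‖z⁻¹‖ ^ (n + 1) * (‖R‖ * C) := by
            apply add_le_add hq
            calc ‖(z⁻¹) ^ (n + 1) • (R * (T ^ (n + 1) * (1 - T)))‖
                = ‖(z⁻¹) ^ (n + 1)‖ * ‖R * (T ^ (n + 1) * (1 - T))‖ :=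
                  norm_smul ((z⁻¹) ^ (n + 1)) (R * (T ^ (n + 1) * (1 - T)))
              _ = ‖z⁻¹‖ ^ (n + 1) * ‖R * (T ^ (n + 1) * (1 - T))‖ := by rw [norm_pow]
              _ ≤ ‖z⁻¹‖ ^ (n + 1) * (‖R‖ * C) := by
                  gcongr
                  exact (norm_mul_le _ _).trans
                    (by gcongr; exact myTermBound hC h (n + 1))
    have hlim : Tendsto (fun n : ℕ => C + ‖z⁻¹‖ ^ (n + 1) * (‖R‖ * C)) atTop (𝓝 C) := by
      have : Tendsto (fun n : ℕ => ‖z⁻¹‖ ^ (n + 1)) atTop (𝓝 0) :=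
        (tendsto_pow_atTop_nhds_zero_of_lt_one (norm_nonneg _) hzinv).comp
          (tendsto_add_atTop_nat 1)
      have := this.mul_const (‖R‖ * C)
      simpa using tendsto_const_nhds.add this
    exact ge_of_tendsto hlim (Filter.Eventually.of_forall key)
  -- conclude
  have hid : (1 : X →L[ℂ] X) = (z - 1) • R + R * (1 - T) := by
    have : z • (1 : X →L[ℂ] X) - T = (z - 1) • (1 : X →L[ℂ] X) + (1 - T) := by
      rw [sub_smul, one_smul]; abel
    calc (1 : X →L[ℂ] X) = R * (z • (1 : X →L[ℂ] X) - T) := hRu.symm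
      _ = R * ((z - 1) • (1 : X →L[ℂ] X) + (1 - T)) := by rw [this]
      _ = (z - 1) • R + R * (1 - T) := by
          rw [mul_add, mul_smul_comm, mul_one]
  have hz1' : (0:ℝ) < ‖z - 1‖ := by
    rw [norm_pos_iff]; exact sub_ne_zero.mpr hz1
  have hnorm : ‖z - 1‖ * ‖R‖ ≤ 1 + C := by
    have : (z - 1) • R = 1 - R * (1 - T) := eq_sub_of_add_eq hid.symm
    calc ‖z - 1‖ * ‖R‖ = ‖(z - 1) • R‖ := (norm_smul (z - 1) R).symm
      _ = ‖(1 : X →L[ℂ] X) - R * (1 - T)‖ := by rw [this]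
      _ ≤ ‖(1 : X →L[ℂ] X)‖ + ‖R * (1 - T)‖ := norm_sub_le _ _
      _ ≤ 1 + C := add_le_add ContinuousLinearMap.norm_id_le hRT
  rw [le_div_iff₀ hz1', mul_comm]
  exact hnorm

end nontriv

section nontriv2
variable [Nontrivial X] {T : X →L[ℂ] X} {C : ℝ}

lemma myCircle (hC : 0 < C)
    (h : ∀ (n : ℕ) (a : ℕ → ℂ),
      ‖∑ k ∈ Finset.range (n + 1), a k • (T ^ k * (1 - T))‖ ≤
        C * (Finset.range (n + 1)).sup' Finset.nonempty_range_add_one (fun k => ‖a k‖))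
    {z : ℂ} (hz : 1 ≤ ‖z‖) (hz1 : z ≠ 1) : IsUnit (z • (1 : X →L[ℂ] X) - T) := by
  rcases lt_or_eq_of_le hz with hzgt | hzeq
  · -- ‖z‖ > 1 : directly from the spectral inclusion
    have := mySpecDisk hC h hzgt
    rw [spectrum.notMem_iff, Algebra.algebraMap_eq_smul_one] at this
    exact this
  -- ‖z‖ = 1
  have hzeq : ‖z‖ = 1 := hzeq.symm
  set d : ℝ := ‖z - 1‖ with hd
  have hd0 : 0 < d := by rw [hd, norm_pos_iff]; exact sub_ne_zero.mpr hz1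
  have hC1 : (0:ℝ) < 1 + C := by linarith
  set η : ℝ := d / (8 * (1 + C)) with hη
  have hη0 : 0 < η := by positivity
  have hη8 : η ≤ d / 8 := by
    rw [hη]
    apply div_le_div_of_nonneg_left hd0.le (by norm_num)
    nlinarith
  set μ : ℂ := z + (η : ℂ) * z with hμ
  have hμz : ‖μ - z‖ = η := by
    rw [hμ]
    simp only [add_sub_cancel_left]
    rw [norm_mul, Complex.norm_real, Real.norm_of_nonneg hη0.le, hzeq, mul_one]
  have hμbig : 1 < ‖μ‖ := by
    have h1 : μ = ((1 + η : ℝ) : ℂ) * z := by rw [hμ]; push_cast; ring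
    rw [h1, norm_mul, Complex.norm_real, Real.norm_of_nonneg (by linarith), hzeq, mul_one]
    linarith
  obtain ⟨u, hu, hubound⟩ := myResolventBound hC h hμbig
  have hμ1 : d - η ≤ ‖μ - 1‖ := by
    have : z - 1 = (μ - 1) + (z - μ) := by ring
    have h2 : d ≤ ‖μ - 1‖ + ‖z - μ‖ := by
      rw [hd, this]; exact norm_add_le _ _
    have h3 : ‖z - μ‖ = η := by rw [← norm_neg, neg_sub]; exact hμz
    linarith
  have hμ1pos : (0:ℝ) < ‖μ - 1‖ := by
    have : (0:ℝ) < d - η := by linarith [hη8, hd0]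
    linarith
  have hRbound : ‖((u⁻¹ : (X →L[ℂ] X)ˣ) : X →L[ℂ] X)‖ ≤ (1 + C) / (d - η) := by
    refine hubound.trans ?_
    apply div_le_div_of_nonneg_left hC1.le (by linarith [hη8, hd0]) hμ1
  set x : X →L[ℂ] X := (μ - z) • ((u⁻¹ : (X →L[ℂ] X)ˣ) : X →L[ℂ] X) with hx
  have hxnorm : ‖x‖ < 1 := by
    have e1 : ‖x‖ = η * ‖((u⁻¹ : (X →L[ℂ] X)ˣ) : X →L[ℂ] X)‖ := by
      rw [hx, norm_smul (μ - z) ((u⁻¹ : (X →L[ℂ] X)ˣ) : X →L[ℂ] X), hμz]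
    have e2 : ‖x‖ ≤ η * ((1 + C) / (d - η)) := by
      rw [e1]; exact mul_le_mul_of_nonneg_left hRbound hη0.le
    have e3 : η * ((1 + C) / (d - η)) ≤ η * ((1 + C) / (7 * d / 8)) := by
      apply mul_le_mul_of_nonneg_left _ hη0.le
      apply div_le_div_of_nonneg_left hC1.le (by positivity) (by linarith)
    have e4 : η * ((1 + C) / (7 * d / 8)) = 1 / 7 := by
      rw [hη]; field_simp
    have e5 : (1:ℝ) / 7 < 1 := by norm_num
    linarith
  have hfac : z • (1 : X →L[ℂ] X) - T = (u : X →L[ℂ] X) * (1 - x) := by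
    rw [mul_sub, mul_one, hx, mul_smul_comm, Units.mul_inv, hu, sub_smul]
    abel
  have hfin := (u * Units.oneSub x hxnorm).isUnit
  rw [Units.val_mul, Units.val_oneSub] at hfin
  rw [hfac]
  exact hfin

end nontriv2

lemma myShiftUnit {T P : X →L[ℂ] X} (hPT : P * T = P) (hTP : T * P = P) (hPP : P * P = P)
    {z : ℂ} (hz0 : z ≠ 0) (hz1 : z ≠ 1) (hu : IsUnit (z • (1 : X →L[ℂ] X) - T)) :
    IsUnit (z • (1 : X →L[ℂ] X) - (T - P)) := by
  obtain ⟨u, hu⟩ := hu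
  have hz1' : z - 1 ≠ 0 := sub_ne_zero.mpr hz1
  set R : X →L[ℂ] X := ((u⁻¹ : (X →L[ℂ] X)ˣ) : X →L[ℂ] X) with hR
  have hRu : R * (z • (1 : X →L[ℂ] X) - T) = 1 := by rw [← hu]; exact u.inv_mul
  have huR : (z • (1 : X →L[ℂ] X) - T) * R = 1 := by rw [← hu]; exact u.mul_inv
  have hPu : P * (z • (1 : X →L[ℂ] X) - T) = (z - 1) • P := by
    rw [mul_sub, mul_smul_comm, mul_one, hPT, sub_smul, one_smul]
  have huP : (z • (1 : X →L[ℂ] X) - T) * P = (z - 1) • P := by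
    rw [sub_mul, smul_mul_assoc, one_mul, hTP, sub_smul, one_smul]
  have hPR : P * R = (z - 1)⁻¹ • P := by
    have h1 : P * ((z • (1 : X →L[ℂ] X) - T) * R) = P := by rw [huR, mul_one]
    rw [← mul_assoc, hPu, smul_mul_assoc] at h1
    calc P * R = (z - 1)⁻¹ • ((z - 1) • (P * R)) := by
          rw [smul_smul, inv_mul_cancel₀ hz1', one_smul]
      _ = (z - 1)⁻¹ • P := by rw [h1]
  have hRP : R * P = (z - 1)⁻¹ • P := by
    have h1 : (R * (z • (1 : X →L[ℂ] X) - T)) * P = P := by rw [hRu, one_mul]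
    rw [mul_assoc, huP, mul_smul_comm] at h1
    calc R * P = (z - 1)⁻¹ • ((z - 1) • (R * P)) := by
          rw [smul_smul, inv_mul_cancel₀ hz1', one_smul]
      _ = (z - 1)⁻¹ • P := by rw [h1]
  set c : ℂ := -(z * (z - 1))⁻¹ with hc
  set V : X →L[ℂ] X := R + c • P with hV
  have hcoef : c * (z - 1) + ((z - 1)⁻¹ + c) = 0 := by
    rw [hc]
    field_simp
    ring
  have key1 : ((z • (1 : X →L[ℂ] X) - T) + P) * V = 1 := by
    have e : ((z • (1 : X →L[ℂ] X) - T) + P) * V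
        = 1 + (c * (z - 1) + ((z - 1)⁻¹ + c)) • P := by
      rw [hV, add_mul, mul_add, mul_add, mul_smul_comm, mul_smul_comm, huR, huP, hPR, hPP]
      module
    rw [e, hcoef, zero_smul, add_zero]
  have key2 : V * ((z • (1 : X →L[ℂ] X) - T) + P) = 1 := by
    have e : V * ((z • (1 : X →L[ℂ] X) - T) + P)
        = 1 + (c * (z - 1) + ((z - 1)⁻¹ + c)) • P := by
      rw [hV, add_mul, mul_add, mul_add, smul_mul_assoc, smul_mul_assoc, hRu, hPu, hRP, hPP]
      module
    rw [e, hcoef, zero_smul, add_zero]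
  have h1 : z • (1 : X →L[ℂ] X) - (T - P) = (z • (1 : X →L[ℂ] X) - T) + P := by abel
  exact ⟨⟨(z • (1 : X →L[ℂ] X) - T) + P, V, key1, key2⟩, h1.symm⟩

lemma myWUnit {T P : X →L[ℂ] X} (hP : P.comp P = P)
    (hrange : LinearMap.range (P : X →ₗ[ℂ] X) = LinearMap.ker ((1 - T : X →L[ℂ] X) : X →ₗ[ℂ] X))
    (hkerP : LinearMap.ker (P : X →ₗ[ℂ] X) = LinearMap.range ((1 - T : X →L[ℂ] X) : X →ₗ[ℂ] X)) :
    IsUnit ((1 : X →L[ℂ] X) - T + P) := by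
  rw [ContinuousLinearMap.isUnit_iff_bijective]
  have hPP : ∀ x : X, P (P x) = P x := fun x => by
    rw [← ContinuousLinearMap.comp_apply, hP]
  have hPker : ∀ x : X, P (((1 : X →L[ℂ] X) - T) x) = 0 := by
    intro x
    have : ((1 : X →L[ℂ] X) - T) x ∈ LinearMap.ker (P : X →ₗ[ℂ] X) := by
      rw [hkerP]; exact LinearMap.mem_range.mpr ⟨x, rfl⟩
    exact LinearMap.mem_ker.mp this
  have hfix : ∀ x : X, ((1 : X →L[ℂ] X) - T) (P x) = 0 := by
    intro x
    have : P x ∈ LinearMap.ker ((1 - T : X →L[ℂ] X) : X →ₗ[ℂ] X) := by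
      rw [← hrange]; exact LinearMap.mem_range.mpr ⟨x, rfl⟩
    exact LinearMap.mem_ker.mp this
  constructor
  · -- injective
    intro a b hab
    rw [← sub_eq_zero, ← map_sub] at hab
    set x := a - b with hxdef
    have hWx : ((1 : X →L[ℂ] X) - T) x + P x = 0 := by
      have : ((1 : X →L[ℂ] X) - T + P) x = ((1 : X →L[ℂ] X) - T) x + P x :=
        ContinuousLinearMap.add_apply _ _ _
      rw [← this, hab]
    have hPx : P x = 0 := by
      have := congrArg P hWx
      rw [map_add, hPker, zero_add, map_zero, hPP] at this
      exact this
    have h1Tx : ((1 : X →L[ℂ] X) - T) x = 0 := by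
      rw [hPx, add_zero] at hWx; exact hWx
    have hxrange : x ∈ LinearMap.range (P : X →ₗ[ℂ] X) := by
      rw [hrange]; exact LinearMap.mem_ker.mpr h1Tx
    obtain ⟨y, hy⟩ := hxrange
    have : x = P x := by rw [← hy, ContinuousLinearMap.coe_coe, hPP]
    rw [← sub_eq_zero]
    rw [← hxdef, this, hPx]
  · -- surjective
    intro y
    have hy : y - P y ∈ LinearMap.range ((1 - T : X →L[ℂ] X) : X →ₗ[ℂ] X) := by
      rw [← hkerP]
      exact LinearMap.mem_ker.mpr (by rw [map_sub, ContinuousLinearMap.coe_coe, hPP, sub_self])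
    obtain ⟨w, hw⟩ := hy
    refine ⟨w - P w + P y, ?_⟩
    have expand : ((1 : X →L[ℂ] X) - T + P) (w - P w + P y)
        = ((1 : X →L[ℂ] X) - T) (w - P w + P y) + P (w - P w + P y) :=
      ContinuousLinearMap.add_apply _ _ _
    rw [expand]
    have e1 : ((1 : X →L[ℂ] X) - T) (w - P w + P y) = y - P y := by
      rw [map_add, map_sub, hfix, hfix, sub_zero, add_zero, ← hw, ContinuousLinearMap.coe_coe]
    have e2 : P (w - P w + P y) = P y := by
      rw [map_add, map_sub, hPP, hPP, sub_self, zero_add]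
    rw [e1, e2]
    abel

lemma myPowP {T P : X →L[ℂ] X} (hTP : T * P = P) : ∀ n : ℕ, T ^ n * P = P := by
  intro n
  induction n with
  | zero => rw [pow_zero, one_mul]
  | succ n ih => rw [pow_succ, mul_assoc, hTP, ih]

lemma mySPow {T P : X →L[ℂ] X} (hPT : P * T = P) (hTP : T * P = P) (hPP : P * P = P) :
    ∀ n : ℕ, (T - P) ^ (n + 1) = T ^ (n + 1) - P := by
  intro n
  induction n with
  | zero => rw [pow_one, pow_one]
  | succ n ih =>
    rw [pow_succ, ih, sub_mul, mul_sub, mul_sub, myPowP hTP, hPT, hPP, ← pow_succ]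
    abel


end myAux

/-- **Exponentially fast convergence when the range is closed.**
If `X` contains no copy of `c₀`, `T` satisfies the unconditional Ritt condition,
`P` is the bounded projection onto `Fix(T)` along the closure of `Ran(I - T)`, and
`Ran(I - T)` is closed, then `‖T^n - P‖ ≤ C rⁿ` for some `C > 0` and `r ∈ [0, 1)`. -/
theorem uncondRitt_closed_range_exponential_convergence
    {X : Type*} [NormedAddCommGroup X] [NormedSpace ℂ X] [CompleteSpace X]
    (T : X →L[ℂ] X) (hc0 : ¬ ContainsCopyOfC0 X) (hT : UncondRitt T)
    (P : X →L[ℂ] X) (hP : P.comp P = P)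
    (hrange : LinearMap.range (P : X →ₗ[ℂ] X) = LinearMap.ker ((1 - T : X →L[ℂ] X) : X →ₗ[ℂ] X))
    (hker : LinearMap.ker (P : X →ₗ[ℂ] X) = (LinearMap.range ((1 - T : X →L[ℂ] X) : X →ₗ[ℂ] X)).topologicalClosure)
    (hclosed : IsClosed ((LinearMap.range ((1 - T : X →L[ℂ] X) : X →ₗ[ℂ] X) : Submodule ℂ X) : Set X)) :
    ∃ C : ℝ, 0 < C ∧ ∃ r : ℝ, 0 ≤ r ∧ r < 1 ∧ ∀ n : ℕ, ‖T ^ n - P‖ ≤ C * r ^ n := by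
  
  rcases subsingleton_or_nontrivial X with hsub | hnt
  · refine ⟨1, one_pos, 0, le_refl 0, zero_lt_one, fun n => ?_⟩
    have h0 : T ^ n - P = 0 := by ext x; exact Subsingleton.elim _ _
    rw [h0, norm_zero]
    positivity
  obtain ⟨C, hC, h⟩ := hT
  have hPP' : P * P = P := hP
  have hkerP : LinearMap.ker (P : X →ₗ[ℂ] X) = LinearMap.range ((1 - T : X →L[ℂ] X) : X →ₗ[ℂ] X) := by
    rw [hker]; exact hclosed.submodule_topologicalClosure_eq
  have hPT : P * T = P := by
    ext x
    have h0 : P (((1 : X →L[ℂ] X) - T) x) = 0 := by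
      have : ((1 : X →L[ℂ] X) - T) x ∈ LinearMap.ker (P : X →ₗ[ℂ] X) := by
        rw [hkerP]; exact LinearMap.mem_range.mpr ⟨x, rfl⟩
      exact LinearMap.mem_ker.mp this
    rw [ContinuousLinearMap.sub_apply, ContinuousLinearMap.one_apply, map_sub,
      sub_eq_zero] at h0
    rw [ContinuousLinearMap.mul_apply]
    exact h0.symm
  have hTP : T * P = P := by
    ext x
    have h0 : P x ∈ LinearMap.ker ((1 - T : X →L[ℂ] X) : X →ₗ[ℂ] X) := by
      rw [← hrange]; exact LinearMap.mem_range.mpr ⟨x, rfl⟩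
    have h1 := LinearMap.mem_ker.mp h0
    rw [ContinuousLinearMap.coe_coe, ContinuousLinearMap.sub_apply, ContinuousLinearMap.one_apply,
      sub_eq_zero] at h1
    rw [ContinuousLinearMap.mul_apply]
    exact h1.symm
  have hW : IsUnit ((1 : X →L[ℂ] X) - T + P) := myWUnit hP hrange hkerP
  haveI : Nontrivial (X →L[ℂ] X) := ⟨1, 0, fun hh => by simpa using congrArg norm hh⟩
  have hspec : ∀ z ∈ spectrum ℂ (T - P), ‖z‖₊ < 1 := by
    intro z hzmem
    by_contra hge
    push_neg at hge
    have hnorm : 1 ≤ ‖z‖ := by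
      have := hge
      exact_mod_cast this
    by_cases hz1 : z = 1
    · apply absurd hzmem
      rw [spectrum.notMem_iff, Algebra.algebraMap_eq_smul_one, hz1, one_smul]
      have e : (1 : X →L[ℂ] X) - (T - P) = 1 - T + P := by abel
      rw [e]; exact hW
    · have hz0 : z ≠ 0 := by
        intro h0; rw [h0, norm_zero] at hnorm; linarith
      have hu := myCircle hC h hnorm hz1
      have := myShiftUnit hPT hTP hPP' hz0 hz1 hu
      apply absurd hzmem
      rw [spectrum.notMem_iff, Algebra.algebraMap_eq_smul_one]
      exact this
  have hrad : spectralRadius ℂ (T - P) < 1 := by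
    have := spectrum.spectralRadius_lt_of_forall_lt (T - P) hspec
    simpa using this
  obtain ⟨r, hr1, hr2⟩ := ENNReal.lt_iff_exists_nnreal_btwn.mp hrad
  have hgel := spectrum.pow_nnnorm_pow_one_div_tendsto_nhds_spectralRadius (T - P)
  obtain ⟨N, hN⟩ := Filter.eventually_atTop.mp (hgel.eventually_lt_const hr1)
  have hSn : ∀ n : ℕ, N ≤ n → 1 ≤ n → ‖(T - P) ^ n‖ ≤ (r : ℝ) ^ n := by
    intro n hNn h1n
    have hx := (hN n hNn).le
    have hn0 : (n : ℝ) ≠ 0 := Nat.cast_ne_zero.mpr (by omega)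
    have e : ((‖(T - P) ^ n‖₊ : ℝ≥0∞) ^ (1 / (n:ℝ))) ^ (n:ℝ) = (‖(T - P) ^ n‖₊ : ℝ≥0∞) := by
      rw [← ENNReal.rpow_mul, one_div, inv_mul_cancel₀ hn0, ENNReal.rpow_one]
    have hle : (‖(T - P) ^ n‖₊ : ℝ≥0∞) ≤ (r : ℝ≥0∞) ^ (n:ℝ) := by
      rw [← e]
      exact ENNReal.rpow_le_rpow hx (Nat.cast_nonneg n)
    rw [ENNReal.rpow_natCast, ← ENNReal.coe_pow, ENNReal.coe_le_coe] at hle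
    calc ‖(T - P) ^ n‖ = ((‖(T - P) ^ n‖₊ : ℝ≥0) : ℝ) := (coe_nnnorm _).symm
      _ ≤ ((r ^ n : ℝ≥0) : ℝ) := by exact_mod_cast hle
      _ = (r : ℝ) ^ n := by push_cast; ring
  have hrlt1 : (r : ℝ) < 1 := by
    rw [ENNReal.coe_lt_one_iff] at hr2
    exact_mod_cast hr2
  set ρ : ℝ := max (r : ℝ) (1/2) with hρ
  have hρ0 : 0 < ρ := lt_of_lt_of_le (by norm_num) (le_max_right _ _)
  have hρ1 : ρ < 1 := max_lt hrlt1 (by norm_num)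
  set N₀ : ℕ := max N 1 with hN₀
  set C₀ : ℝ := ∑ k ∈ Finset.range (N₀ + 1), ‖T ^ k - P‖ / ρ ^ k with hC₀
  have hC₀0 : 0 ≤ C₀ := Finset.sum_nonneg fun k _ => by positivity
  refine ⟨C₀ + 1, by linarith, ρ, hρ0.le, hρ1, fun n => ?_⟩
  by_cases hn : n ≤ N₀
  · have hmem : n ∈ Finset.range (N₀ + 1) := Finset.mem_range.mpr (by omega)
    have hsingle : ‖T ^ n - P‖ / ρ ^ n ≤ C₀ :=
      Finset.single_le_sum (f := fun k => ‖T ^ k - P‖ / ρ ^ k)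
        (fun k _ => by positivity) hmem
    rw [div_le_iff₀ (by positivity)] at hsingle
    calc ‖T ^ n - P‖ ≤ C₀ * ρ ^ n := hsingle
      _ ≤ (C₀ + 1) * ρ ^ n := by
          apply mul_le_mul_of_nonneg_right (by linarith) (by positivity)
  · push_neg at hn
    have hn1 : 1 ≤ n := le_trans (le_max_right N 1) hn.le
    obtain ⟨m, rfl⟩ : ∃ m, n = m + 1 := ⟨n - 1, by omega⟩
    have hid : T ^ (m + 1) - P = (T - P) ^ (m + 1) := (mySPow hPT hTP hPP' m).symm
    have hNm : N ≤ m + 1 := le_trans (le_max_left N 1) hn.le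
    calc ‖T ^ (m + 1) - P‖ = ‖(T - P) ^ (m + 1)‖ := by rw [hid]
      _ ≤ (r : ℝ) ^ (m + 1) := hSn (m + 1) hNm (by omega)
      _ ≤ ρ ^ (m + 1) := pow_le_pow_left₀ r.coe_nonneg (le_max_left _ _) _
      _ ≤ (C₀ + 1) * ρ ^ (m + 1) := le_mul_of_one_le_left (by positivity) (by linarith)
end

section
/- Let X be a complex Banach space which does not contain a copy of c₀, let T be a bounded linear operator on X satisfying the unconditional Ritt condition, and let P be a bounded linear projection on X (P² = P) with range Fix(T) = ker(I − T) and kernel equal to the closure of the range of I − T. Then for every real number α > 0 there exists a dense linear subspace X_α of X such that for all x ∈ X_α one has n^α · ‖T^n x − Px‖ → 0 as n → ∞. -/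
open Filter Topology

section Aux

variable {X : Type*} [NormedAddCommGroup X] [NormedSpace ℂ X]

private lemma uR_commute (T : X →L[ℂ] X) : Commute T (1 - T) :=
  (Commute.one_right T).sub_right (Commute.refl T)

private lemma uR_F_mul (T : X →L[ℂ] X) (k l : ℕ) :
    (T ^ k * (1 - T)) * (T ^ l * (1 - T)) = T ^ (k + l) * (1 - T) ^ 2 := by
  have hc : (1 - T) * T ^ l = T ^ l * (1 - T) :=
    ((uR_commute T).symm.pow_right l).eq
  calc (T ^ k * (1 - T)) * (T ^ l * (1 - T))
      = T ^ k * (((1 - T) * T ^ l) * (1 - T)) := by rw [mul_assoc, mul_assoc]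
    _ = T ^ k * ((T ^ l * (1 - T)) * (1 - T)) := by rw [hc]
    _ = (T ^ k * T ^ l) * ((1 - T) * (1 - T)) := by rw [mul_assoc, mul_assoc]
    _ = T ^ (k + l) * (1 - T) ^ 2 := by rw [← pow_add, sq]

private lemma uR_base (T : X →L[ℂ] X) {C : ℝ} (hC : 0 < C)
    (hcoeff : ∀ (n : ℕ) (a : ℕ → ℂ), (∀ k, ‖a k‖ ≤ 1) →
      ‖∑ k ∈ Finset.range (n + 1), a k • (T ^ k * (1 - T))‖ ≤ C) :
    ∀ n : ℕ, ((n : ℝ) + 1) * ‖T ^ n * (1 - T) ^ 2‖ ≤ C ^ 2 := by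
  intro n
  classical
  set N : ℕ := 2 * n + 1 with hNdef
  have hN0 : N ≠ 0 := by omega
  set ω : ℂ := Complex.exp (2 * ↑Real.pi * Complex.I / N) with hω
  have hprim : IsPrimitiveRoot ω N := Complex.isPrimitiveRoot_exp N hN0
  have hωN : ω ^ N = 1 := hprim.pow_eq_one
  have hωnorm : ‖ω‖ = 1 := Complex.norm_eq_one_of_pow_eq_one hωN hN0
  set S : ℕ → (X →L[ℂ] X) :=
    fun j => ∑ k ∈ Finset.range (n + 1), (fun k => (ω ^ j) ^ k) k • (T ^ k * (1 - T)) with hS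
  have hSnorm : ∀ j, ‖S j‖ ≤ C := by
    intro j
    exact hcoeff n _ (fun k => by
      simp only [norm_pow, hωnorm, one_pow, le_refl])
  -- geometric sum evaluation
  have hgeom : ∀ d : ℕ, (∑ j ∈ Finset.range N, (ω ^ d) ^ j)
      = if N ∣ d then (N : ℂ) else 0 := by
    intro d
    by_cases h : ω ^ d = 1
    · rw [if_pos ((hprim.pow_eq_one_iff_dvd d).mp h)]
      simp [h]
    · rw [if_neg (fun hdvd => h ((hprim.pow_eq_one_iff_dvd d).mpr hdvd))]
      rw [geom_sum_eq h]
      have : (ω ^ d) ^ N = 1 := by rw [pow_right_comm, hωN, one_pow]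
      rw [this, sub_self, zero_div]
  -- the key identity
  have key : ∑ j ∈ Finset.range N, (ω ^ (N - n)) ^ j • (S j * S j)
      = ((N : ℂ) * ((n : ℂ) + 1)) • (T ^ n * (1 - T) ^ 2) := by
    have expand : ∀ j, (ω ^ (N - n)) ^ j • (S j * S j)
        = ∑ k ∈ Finset.range (n + 1), ∑ l ∈ Finset.range (n + 1),
            (ω ^ (N - n + k + l)) ^ j • (T ^ (k + l) * (1 - T) ^ 2) := by
      intro j
      rw [hS]
      rw [Finset.sum_mul_sum]
      rw [Finset.smul_sum]
      refine Finset.sum_congr rfl fun k _ => ?_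
      rw [Finset.smul_sum]
      refine Finset.sum_congr rfl fun l _ => ?_
      rw [smul_mul_smul_comm, uR_F_mul, smul_smul]
      congr 1
      rw [pow_right_comm ω (N - n) j, pow_right_comm ω (N - n + k + l) j,
        ← pow_add, ← pow_add, add_assoc]
    calc ∑ j ∈ Finset.range N, (ω ^ (N - n)) ^ j • (S j * S j)
        = ∑ j ∈ Finset.range N, ∑ k ∈ Finset.range (n + 1), ∑ l ∈ Finset.range (n + 1),
            (ω ^ (N - n + k + l)) ^ j • (T ^ (k + l) * (1 - T) ^ 2) :=
          Finset.sum_congr rfl fun j _ => expand j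
      _ = ∑ k ∈ Finset.range (n + 1), ∑ l ∈ Finset.range (n + 1),
            (∑ j ∈ Finset.range N, (ω ^ (N - n + k + l)) ^ j) • (T ^ (k + l) * (1 - T) ^ 2) := by
          rw [Finset.sum_comm]
          refine Finset.sum_congr rfl fun k _ => ?_
          rw [Finset.sum_comm]
          refine Finset.sum_congr rfl fun l _ => ?_
          rw [Finset.sum_smul]
      _ = ∑ k ∈ Finset.range (n + 1), ∑ l ∈ Finset.range (n + 1),
            (if k + l = n then ((N : ℂ)) • (T ^ n * (1 - T) ^ 2) else 0) := by
          refine Finset.sum_congr rfl fun k hk => Finset.sum_congr rfl fun l hl => ?_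
          rw [hgeom]
          have hk' : k ≤ n := by simpa [Nat.lt_succ_iff] using Finset.mem_range.mp hk
          have hl' : l ≤ n := by simpa [Nat.lt_succ_iff] using Finset.mem_range.mp hl
          by_cases hkl : k + l = n
          · have hdvd : N ∣ (N - n + k + l) := by
              have : N - n + k + l = N := by omega
              rw [this]
            rw [if_pos hdvd, if_pos hkl, hkl]
          · have hndvd : ¬ N ∣ (N - n + k + l) := by
              intro hdvd
              have h1 : 0 < N - n + k + l := by omega
              have h2 : N - n + k + l < 2 * N := by omega
              have := Nat.eq_of_dvd_of_lt_two_mul (by omega) hdvd h2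
              omega
            rw [if_neg hndvd, if_neg hkl, zero_smul]
      _ = ∑ k ∈ Finset.range (n + 1),
            ((N : ℂ)) • (T ^ n * (1 - T) ^ 2) := by
          refine Finset.sum_congr rfl fun k hk => ?_
          have hk' : k ≤ n := by simpa [Nat.lt_succ_iff] using Finset.mem_range.mp hk
          have : ∀ l, (k + l = n) ↔ (l = n - k) := by intro l; omega
          calc ∑ l ∈ Finset.range (n + 1),
                (if k + l = n then ((N : ℂ)) • (T ^ n * (1 - T) ^ 2) else 0)
              = ∑ l ∈ Finset.range (n + 1),
                (if l = n - k then ((N : ℂ)) • (T ^ n * (1 - T) ^ 2) else 0) := by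
                refine Finset.sum_congr rfl fun l _ => ?_
                rw [if_congr (this l) rfl rfl]
            _ = ((N : ℂ)) • (T ^ n * (1 - T) ^ 2) := by
                rw [Finset.sum_ite_eq' (Finset.range (n + 1)) (n - k)]
                rw [if_pos (Finset.mem_range.mpr (by omega))]
      _ = ((N : ℂ) * ((n : ℂ) + 1)) • (T ^ n * (1 - T) ^ 2) := by
          rw [Finset.sum_const, Finset.card_range, ← Nat.cast_smul_eq_nsmul ℂ, smul_smul]
          congr 1
          push_cast
          ring
  -- norm estimates
  have hub : ‖∑ j ∈ Finset.range N, (ω ^ (N - n)) ^ j • (S j * S j)‖ ≤ (N : ℝ) * C ^ 2 := by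
    calc ‖∑ j ∈ Finset.range N, (ω ^ (N - n)) ^ j • (S j * S j)‖
        ≤ ∑ j ∈ Finset.range N, ‖(ω ^ (N - n)) ^ j • (S j * S j)‖ := norm_sum_le _ _
      _ ≤ ∑ j ∈ Finset.range N, C ^ 2 := by
          refine Finset.sum_le_sum fun j _ => ?_
          have hns : ‖(ω ^ (N - n)) ^ j • (S j * S j)‖ = ‖(ω ^ (N - n)) ^ j‖ * ‖S j * S j‖ :=
            norm_smul (β := X →L[ℂ] X) _ _
          have h1 : ‖(ω ^ (N - n)) ^ j‖ = 1 := by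
            simp [norm_pow, hωnorm]
          rw [hns, h1, one_mul]
          calc ‖S j * S j‖ ≤ ‖S j‖ * ‖S j‖ := norm_mul_le _ _
            _ ≤ C * C := mul_le_mul (hSnorm j) (hSnorm j) (norm_nonneg _) hC.le
            _ = C ^ 2 := (sq C).symm
      _ = (N : ℝ) * C ^ 2 := by rw [Finset.sum_const, Finset.card_range, nsmul_eq_mul]
  have hlhs : ‖((N : ℂ) * ((n : ℂ) + 1)) • (T ^ n * (1 - T) ^ 2)‖
      = (N : ℝ) * (((n : ℝ) + 1) * ‖T ^ n * (1 - T) ^ 2‖) := by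
    rw [norm_smul (β := X →L[ℂ] X), norm_mul]
    have h1 : ‖(N : ℂ)‖ = (N : ℝ) := by
      rw [Complex.norm_natCast]
    have h2 : ‖((n : ℂ) + 1)‖ = (n : ℝ) + 1 := by
      have : ((n : ℂ) + 1) = ((n + 1 : ℕ) : ℂ) := by push_cast; ring
      rw [this, Complex.norm_natCast]
      push_cast; ring
    rw [h1, h2, mul_assoc]
  have hNpos : (0 : ℝ) < (N : ℝ) := by positivity
  have : (N : ℝ) * (((n : ℝ) + 1) * ‖T ^ n * (1 - T) ^ 2‖) ≤ (N : ℝ) * C ^ 2 := by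
    rw [← hlhs, ← key]; exact hub
  exact le_of_mul_le_mul_left this hNpos
private lemma uR_commute' (T : X →L[ℂ] X) : Commute T (1 - T) :=
  (Commute.one_right T).sub_right (Commute.refl T)

private lemma uR_split (T : X →L[ℂ] X) (a c m : ℕ) :
    T ^ (a + c) * (1 - T) ^ (m + 2) = (T ^ a * (1 - T) ^ m) * (T ^ c * (1 - T) ^ 2) := by
  have hc : ((1 - T) ^ m) * T ^ c = T ^ c * ((1 - T) ^ m) :=
    (((uR_commute' T).symm.pow_right c).pow_left m).eq
  calc T ^ (a + c) * (1 - T) ^ (m + 2)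
      = (T ^ a * T ^ c) * ((1 - T) ^ m * (1 - T) ^ 2) := by rw [pow_add, pow_add]
    _ = T ^ a * ((T ^ c * (1 - T) ^ m) * (1 - T) ^ 2) := by
        rw [mul_assoc, mul_assoc, ← mul_assoc (T ^ c)]
    _ = T ^ a * (((1 - T) ^ m * T ^ c) * (1 - T) ^ 2) := by rw [hc]
    _ = (T ^ a * (1 - T) ^ m) * (T ^ c * (1 - T) ^ 2) := by
        rw [mul_assoc, mul_assoc]
/-- decay bootstrap -/
private lemma uR_decay (T : X →L[ℂ] X) {C : ℝ} (hC : 0 < C)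
    (hbase : ∀ n : ℕ, ((n : ℝ) + 1) * ‖T ^ n * (1 - T) ^ 2‖ ≤ C ^ 2) :
    ∀ b : ℕ, ∃ m : ℕ, 1 ≤ m ∧ ∃ D : ℝ, 0 ≤ D ∧
      ∀ n : ℕ, ((n : ℝ) + 1) ^ b * ‖T ^ n * (1 - T) ^ m‖ ≤ D := by
  intro b
  induction b with
  | zero =>
      refine ⟨2, by norm_num, C ^ 2, by positivity, fun n => ?_⟩
      have h1 : ((n : ℝ) + 1) ^ 0 * ‖T ^ n * (1 - T) ^ 2‖ ≤ ((n : ℝ) + 1) * ‖T ^ n * (1 - T) ^ 2‖ := by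
        rw [pow_zero, one_mul]
        have : (1 : ℝ) ≤ (n : ℝ) + 1 := by
          have : (0:ℝ) ≤ (n:ℝ) := Nat.cast_nonneg n
          linarith
        nlinarith [norm_nonneg (T ^ n * (1 - T) ^ 2)]
      exact h1.trans (hbase n)
  | succ b ih =>
      obtain ⟨m, hm, D, hD, hQ⟩ := ih
      refine ⟨m + 2, by omega, 2 ^ (b + 1) * D * C ^ 2, by positivity, fun n => ?_⟩
      set a : ℕ := n / 2 with ha
      set c : ℕ := n - n / 2 with hc
      have hac : a + c = n := by omega
      have h2a : (n : ℝ) + 1 ≤ 2 * ((a : ℝ) + 1) := by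
        have : n ≤ 2 * a + 1 := by omega
        push_cast
        have := (Nat.cast_le (α := ℝ)).mpr this
        push_cast at this
        linarith
      have h2c : (n : ℝ) + 1 ≤ 2 * ((c : ℝ) + 1) := by
        have : n ≤ 2 * c + 1 := by omega
        have := (Nat.cast_le (α := ℝ)).mpr this
        push_cast at this
        linarith
      have hsplit : T ^ n * (1 - T) ^ (m + 2)
          = (T ^ a * (1 - T) ^ m) * (T ^ c * (1 - T) ^ 2) := by
        rw [← hac]; exact uR_split T a c m
      set A := T ^ a * (1 - T) ^ m
      set B := T ^ c * (1 - T) ^ 2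
      have hA : ((a : ℝ) + 1) ^ b * ‖A‖ ≤ D := hQ a
      have hB : ((c : ℝ) + 1) * ‖B‖ ≤ C ^ 2 := hbase c
      have hnorm : ‖T ^ n * (1 - T) ^ (m + 2)‖ ≤ ‖A‖ * ‖B‖ := by
        rw [hsplit]; exact norm_mul_le _ _
      have hA0 : (0 : ℝ) ≤ ‖A‖ := norm_nonneg _
      have hB0 : (0 : ℝ) ≤ ‖B‖ := norm_nonneg _
      have ha1 : (0 : ℝ) ≤ (a : ℝ) + 1 := by positivity
      have hc1 : (0 : ℝ) ≤ (c : ℝ) + 1 := by positivity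
      have hn1 : (0 : ℝ) ≤ (n : ℝ) + 1 := by positivity
      calc ((n : ℝ) + 1) ^ (b + 1) * ‖T ^ n * (1 - T) ^ (m + 2)‖
          ≤ ((n : ℝ) + 1) ^ (b + 1) * (‖A‖ * ‖B‖) := by
            exact mul_le_mul_of_nonneg_left hnorm (by positivity)
        _ ≤ ((2 * ((a : ℝ) + 1)) ^ b * (2 * ((c : ℝ) + 1))) * (‖A‖ * ‖B‖) := by
            refine mul_le_mul_of_nonneg_right ?_ (by positivity)
            rw [pow_succ]
            exact mul_le_mul (pow_le_pow_left₀ hn1 h2a b) h2c hn1 (by positivity)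
        _ = 2 ^ (b + 1) * ((((a : ℝ) + 1) ^ b * ‖A‖) * ((((c : ℝ) + 1)) * ‖B‖)) := by
            rw [mul_pow]; ring
        _ ≤ 2 ^ (b + 1) * (D * C ^ 2) := by
            refine mul_le_mul_of_nonneg_left ?_ (by positivity)
            exact mul_le_mul hA hB (by positivity) hD
        _ = 2 ^ (b + 1) * D * C ^ 2 := by ring
private lemma uR_geom (T : X →L[ℂ] X) (k : ℕ) :
    (1 - T) * (∑ i ∈ Finset.range k, T ^ i) = 1 - T ^ k := by
  calc (1 - T) * (∑ i ∈ Finset.range k, T ^ i)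
      = -((T - 1) * (∑ i ∈ Finset.range k, T ^ i)) := by rw [← neg_sub T 1, neg_mul]
    _ = -(T ^ k - 1) := by rw [mul_geom_sum]
    _ = 1 - T ^ k := by rw [neg_sub]

private lemma uR_approx (T : X →L[ℂ] X) {M : ℝ} (hpow : ∀ n : ℕ, ‖T ^ n‖ ≤ M)
    (j : ℕ) (z : X) :
    ((1 - T) ^ (j + 1)) z ∈ closure (Set.range ⇑((1 - T) ^ (j + 2))) := by
  set W : ℕ → (X →L[ℂ] X) := fun N => ∑ k ∈ Finset.range N, ∑ i ∈ Finset.range k, T ^ i with hW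
  have h2 : ∀ N : ℕ, (1 - T) * W N = N • (1 : X →L[ℂ] X) - ∑ k ∈ Finset.range N, T ^ k := by
    intro N
    rw [hW, Finset.mul_sum]
    calc ∑ k ∈ Finset.range N, ((1 - T) * ∑ i ∈ Finset.range k, T ^ i)
        = ∑ k ∈ Finset.range N, ((1 : X →L[ℂ] X) - T ^ k) :=
          Finset.sum_congr rfl fun k _ => uR_geom T k
      _ = N • (1 : X →L[ℂ] X) - ∑ k ∈ Finset.range N, T ^ k := by
          rw [Finset.sum_sub_distrib, Finset.sum_const, Finset.card_range]
  have h3 : ∀ N : ℕ, (1 - T) * ((1 - T) * W N)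
      = N • (1 - T) - ((1 : X →L[ℂ] X) - T ^ N) := by
    intro N
    rw [h2, mul_sub, mul_smul_comm, mul_one, uR_geom T N]
  have hkey : ∀ N : ℕ, (1 - T) ^ (j + 2) * W N
      = N • ((1 - T) ^ (j + 1)) - (1 - T) ^ j * ((1 : X →L[ℂ] X) - T ^ N) := by
    intro N
    have e1 : (1 - T) ^ (j + 2) = (1 - T) ^ j * ((1 - T) * (1 - T)) := by
      rw [pow_add, sq]
    rw [e1, mul_assoc, mul_assoc (1 - T) (1 - T) (W N), h3 N, mul_sub,
      mul_smul_comm, ← pow_succ]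
  set u := ((1 - T) ^ (j + 1)) z with hu
  set φ : ℕ → X := fun N => ((1 - T) ^ (j + 2)) ((N : ℂ)⁻¹ • (W N z)) with hφ
  have hmem : ∀ N, φ N ∈ Set.range ⇑((1 - T) ^ (j + 2)) := fun N => ⟨_, rfl⟩
  set K : ℝ := ‖(1 - T) ^ j‖ * (1 + M) * ‖z‖ with hK
  have hev : ∀ᶠ N : ℕ in atTop, ‖φ N - u‖ ≤ K / N := by
    filter_upwards [eventually_ge_atTop 1] with N hN
    have hNne : ((N : ℂ)) ≠ 0 := by
      simp only [ne_eq, Nat.cast_eq_zero]; omega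
    set v : X := ((1 - T) ^ j * ((1 : X →L[ℂ] X) - T ^ N)) z with hv
    have step : φ N = u - (N : ℂ)⁻¹ • v := by
      rw [hφ]
      simp only []
      rw [map_smul]
      rw [← ContinuousLinearMap.mul_apply ((1 - T) ^ (j + 2)) (W N), hkey N]
      rw [ContinuousLinearMap.sub_apply]
      have : (N • ((1 - T) ^ (j + 1))) z = ((N : ℂ)) • u := by
        rw [ContinuousLinearMap.smul_apply, hu, ← Nat.cast_smul_eq_nsmul ℂ]
      rw [this, ← hv, smul_sub, smul_smul, inv_mul_cancel₀ hNne, one_smul]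
    rw [step]
    have : u - (N : ℂ)⁻¹ • v - u = -((N : ℂ)⁻¹ • v) := by abel
    rw [this, norm_neg, norm_smul (β := X)]
    have hvn : ‖v‖ ≤ K := by
      rw [hv, hK]
      calc ‖((1 - T) ^ j * ((1 : X →L[ℂ] X) - T ^ N)) z‖
          ≤ ‖(1 - T) ^ j * ((1 : X →L[ℂ] X) - T ^ N)‖ * ‖z‖ :=
            ContinuousLinearMap.le_opNorm _ z
        _ ≤ (‖(1 - T) ^ j‖ * ‖(1 : X →L[ℂ] X) - T ^ N‖) * ‖z‖ := by
            exact mul_le_mul_of_nonneg_right (norm_mul_le _ _) (norm_nonneg z)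
        _ ≤ (‖(1 - T) ^ j‖ * (1 + M)) * ‖z‖ := by
            refine mul_le_mul_of_nonneg_right ?_ (norm_nonneg z)
            refine mul_le_mul_of_nonneg_left ?_ (norm_nonneg _)
            calc ‖(1 : X →L[ℂ] X) - T ^ N‖ ≤ ‖(1 : X →L[ℂ] X)‖ + ‖T ^ N‖ := norm_sub_le _ _
              _ ≤ 1 + M := add_le_add ContinuousLinearMap.norm_id_le (hpow N)
    have hinv : ‖(N : ℂ)⁻¹‖ = 1 / (N : ℝ) := by
      rw [norm_inv, Complex.norm_natCast, one_div]
    rw [hinv]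
    rw [div_eq_mul_inv K, mul_comm K, ← one_div]
    exact mul_le_mul_of_nonneg_left hvn (by positivity)
  have hlim : Tendsto (fun N : ℕ => φ N - u) atTop (𝓝 0) :=
    squeeze_zero_norm' hev (tendsto_const_div_atTop_nhds_zero_nat K)
  have hφlim : Tendsto φ atTop (𝓝 u) := by
    have := hlim.add_const u
    simpa using this
  exact mem_closure_of_tendsto hφlim (Eventually.of_forall hmem)

private lemma uR_range_closure (T : X →L[ℂ] X) {M : ℝ} (hpow : ∀ n : ℕ, ‖T ^ n‖ ≤ M) :
    ∀ m : ℕ, 1 ≤ m → ∀ y : X, (1 - T) y ∈ closure (Set.range ⇑((1 - T) ^ m)) := by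
  intro m
  induction m with
  | zero => omega
  | succ m ih =>
      intro _ y
      by_cases hm : m = 0
      · subst hm
        rw [pow_one]
        exact subset_closure (Set.mem_range_self y)
      · have hm1 : 1 ≤ m := Nat.one_le_iff_ne_zero.mpr hm
        have h1 : (1 - T) y ∈ closure (Set.range ⇑((1 - T) ^ m)) := ih hm1 y
        have hsub : Set.range ⇑((1 - T) ^ m) ⊆ closure (Set.range ⇑((1 - T) ^ (m + 1))) := by
          rintro _ ⟨w, rfl⟩
          obtain ⟨i, rfl⟩ : ∃ i, m = i + 1 := ⟨m - 1, by omega⟩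
          exact uR_approx T hpow i w
        have h2 := closure_mono hsub h1
        rwa [closure_closure] at h2
end Aux

/-- **Polynomially fast convergence on dense subspaces.**
If `X` contains no copy of `c₀`, `T` satisfies the unconditional Ritt condition and
`P` is the bounded projection onto `Fix(T)` along the closure of `Ran(I - T)`, then
for every `α > 0` there is a dense subspace `X_α` of `X` such that
`n^α ‖T^n x - Px‖ → 0` for every `x ∈ X_α`. -/
theorem uncondRitt_polynomial_rates_on_dense_subspace
    {X : Type*} [NormedAddCommGroup X] [NormedSpace ℂ X] [CompleteSpace X]
    (T : X →L[ℂ] X) (hc0 : ¬ ContainsCopyOfC0 X) (hT : UncondRitt T)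
    (P : X →L[ℂ] X) (hP : P.comp P = P)
    (hrange : LinearMap.range (P : X →ₗ[ℂ] X) = LinearMap.ker ((1 - T : X →L[ℂ] X) : X →ₗ[ℂ] X))
    (hker : LinearMap.ker (P : X →ₗ[ℂ] X) = (LinearMap.range ((1 - T : X →L[ℂ] X) : X →ₗ[ℂ] X)).topologicalClosure) :
    ∀ α : ℝ, 0 < α → ∃ Xα : Submodule ℂ X, Dense (Xα : Set X) ∧
      ∀ x ∈ Xα, Tendsto (fun n : ℕ => (n : ℝ) ^ α * ‖(T ^ n) x - P x‖) atTop (𝓝 0) := by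
  obtain ⟨C, hC, hb⟩ := hT
  have hcoeff : ∀ (n : ℕ) (a : ℕ → ℂ), (∀ k, ‖a k‖ ≤ 1) →
      ‖∑ k ∈ Finset.range (n + 1), a k • (T ^ k * (1 - T))‖ ≤ C := by
    intro n a ha
    refine (hb n a).trans ?_
    have h1 : (Finset.range (n + 1)).sup' Finset.nonempty_range_add_one (fun k => ‖a k‖) ≤ 1 :=
      Finset.sup'_le _ _ fun k _ => ha k
    calc C * (Finset.range (n + 1)).sup' Finset.nonempty_range_add_one (fun k => ‖a k‖)
        ≤ C * 1 := mul_le_mul_of_nonneg_left h1 hC.le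
      _ = C := mul_one C
  have hpow : ∀ n : ℕ, ‖T ^ n‖ ≤ 1 + C := by
    intro n
    cases n with
    | zero => rw [pow_zero]; exact ContinuousLinearMap.norm_id_le.trans (by linarith)
    | succ n =>
        have hsum : ∑ k ∈ Finset.range (n + 1), (fun _ : ℕ => (1 : ℂ)) k • (T ^ k * (1 - T))
            = 1 - T ^ (n + 1) := by
          have e : ∀ k : ℕ, (1 : ℂ) • (T ^ k * (1 - T)) = T ^ k - T ^ (k + 1) := by
            intro k
            rw [one_smul, mul_sub, mul_one, ← pow_succ]
          calc ∑ k ∈ Finset.range (n + 1), (fun _ : ℕ => (1 : ℂ)) k • (T ^ k * (1 - T))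
              = ∑ k ∈ Finset.range (n + 1), (T ^ k - T ^ (k + 1)) :=
                Finset.sum_congr rfl fun k _ => e k
            _ = T ^ 0 - T ^ (n + 1) := Finset.sum_range_sub' (fun k => T ^ k) (n + 1)
            _ = 1 - T ^ (n + 1) := by rw [pow_zero]
        have h1 : ‖(1 : X →L[ℂ] X) - T ^ (n + 1)‖ ≤ C := by
          rw [← hsum]
          exact hcoeff n _ (fun k => by simp)
        have h2 : ‖T ^ (n + 1)‖ = ‖(1 : X →L[ℂ] X) - ((1 : X →L[ℂ] X) - T ^ (n + 1))‖ := by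
          congr 1; abel
        rw [h2]
        calc ‖(1 : X →L[ℂ] X) - ((1 : X →L[ℂ] X) - T ^ (n + 1))‖
            ≤ ‖(1 : X →L[ℂ] X)‖ + ‖(1 : X →L[ℂ] X) - T ^ (n + 1)‖ := norm_sub_le _ _
          _ ≤ 1 + C := add_le_add ContinuousLinearMap.norm_id_le h1
  have hbase := uR_base T hC hcoeff
  intro α hα
  set k : ℕ := ⌈α⌉₊ with hkdef
  obtain ⟨m, hm, D, hD, hQ⟩ := uR_decay T hC hbase (k + 1)
  set Y : Submodule ℂ X := LinearMap.range (P : X →ₗ[ℂ] X) ⊔ LinearMap.range ((((1 - T) ^ m : X →L[ℂ] X)) : X →ₗ[ℂ] X) with hY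
  refine ⟨Y, ?_, ?_⟩
  · -- density
    rw [Submodule.dense_iff_topologicalClosure_eq_top, eq_top_iff]
    intro x _
    have hPx : P x ∈ Y.topologicalClosure :=
      Y.le_topologicalClosure (Submodule.mem_sup_left (LinearMap.mem_range_self (P : X →ₗ[ℂ] X) x))
    have hker' : x - P x ∈ LinearMap.ker (P : X →ₗ[ℂ] X) := by
      rw [LinearMap.mem_ker, ContinuousLinearMap.coe_coe]
      have h0 : P (P x) = P x := by
        rw [← ContinuousLinearMap.comp_apply, hP]
      rw [map_sub, h0, sub_self]
    have hxP : x - P x ∈ (LinearMap.range ((1 - T : X →L[ℂ] X) : X →ₗ[ℂ] X)).topologicalClosure := by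
      rw [← hker]; exact hker'
    have hle : (LinearMap.range ((1 - T : X →L[ℂ] X) : X →ₗ[ℂ] X) : Submodule ℂ X) ≤ Y.topologicalClosure := by
      rintro _ ⟨y, rfl⟩
      have h1 : (1 - T) y ∈ closure (Set.range ⇑((1 - T) ^ m)) :=
        uR_range_closure T hpow m hm y
      have h2 : Set.range ⇑((1 - T) ^ m) ⊆ (Y : Set X) := by
        rintro _ ⟨w, rfl⟩
        exact Submodule.mem_sup_right (LinearMap.mem_range_self _ w)
      have h3 := closure_mono h2 h1
      rwa [← Submodule.topologicalClosure_coe] at h3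
    have hle2 : (LinearMap.range ((1 - T : X →L[ℂ] X) : X →ₗ[ℂ] X)).topologicalClosure ≤ Y.topologicalClosure :=
      Submodule.topologicalClosure_minimal _ hle (Submodule.isClosed_topologicalClosure Y)
    have hx2 : x - P x ∈ Y.topologicalClosure := hle2 hxP
    have hsum := Y.topologicalClosure.add_mem hPx hx2
    simpa using hsum
  · -- the rate
    intro x hx
    obtain ⟨u, hu, v, hv, rfl⟩ := Submodule.mem_sup.mp hx
    obtain ⟨w, hw⟩ := hu
    obtain ⟨y, hy⟩ := hv
    rw [ContinuousLinearMap.coe_coe] at hw hy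
    have hPu : P u = u := by
      rw [← hw, ← ContinuousLinearMap.comp_apply, hP]
    have hTu : T u = u := by
      have h1 : u ∈ LinearMap.ker ((1 - T : X →L[ℂ] X) : X →ₗ[ℂ] X) := by
        rw [← hrange]; exact ⟨w, hw⟩
      have h2 : ((1 : X →L[ℂ] X) - T) u = 0 := LinearMap.mem_ker.mp h1
      have h3 : u - T u = 0 := by
        simpa [ContinuousLinearMap.sub_apply] using h2
      exact (sub_eq_zero.mp h3).symm
    have hTnu : ∀ n : ℕ, (T ^ n) u = u := by
      intro n
      induction n with
      | zero => rw [pow_zero, ContinuousLinearMap.one_apply]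
      | succ n ih => rw [pow_succ, ContinuousLinearMap.mul_apply, hTu, ih]
    have hPv : P v = 0 := by
      have h1 : v ∈ LinearMap.range ((1 - T : X →L[ℂ] X) : X →ₗ[ℂ] X) := by
        obtain ⟨j, rfl⟩ : ∃ j, m = j + 1 := ⟨m - 1, by omega⟩
        refine ⟨((1 - T) ^ j) y, ?_⟩
        rw [← hy, pow_succ', ContinuousLinearMap.mul_apply, ContinuousLinearMap.coe_coe]
      have h2 : v ∈ LinearMap.ker (P : X →ₗ[ℂ] X) := by
        rw [hker]
        exact (LinearMap.range ((1 - T : X →L[ℂ] X) : X →ₗ[ℂ] X)).le_topologicalClosure h1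
      exact LinearMap.mem_ker.mp h2
    have hform : ∀ n : ℕ, (T ^ n) (u + v) - P (u + v) = (T ^ n * (1 - T) ^ m) y := by
      intro n
      rw [map_add, map_add, hPu, hPv, add_zero, hTnu n, ContinuousLinearMap.mul_apply, hy]
      abel
    have hgoal : ∀ n : ℕ, (n : ℝ) ^ α * ‖(T ^ n) (u + v) - P (u + v)‖
        ≤ (D * ‖y‖) * (1 / ((n : ℝ) + 1)) := by
      intro n
      have hpos : (0 : ℝ) < ((n : ℝ) + 1) ^ (k + 1) := by positivity
      have hop : ‖T ^ n * (1 - T) ^ m‖ ≤ D / ((n : ℝ) + 1) ^ (k + 1) := by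
        rw [le_div_iff₀ hpos]
        have := hQ n
        linarith [this, mul_comm (‖T ^ n * (1 - T) ^ m‖) (((n : ℝ) + 1) ^ (k + 1))]
      have h1 : ‖(T ^ n) (u + v) - P (u + v)‖ ≤ (D / ((n : ℝ) + 1) ^ (k + 1)) * ‖y‖ := by
        rw [hform n]
        exact (ContinuousLinearMap.le_opNorm _ y).trans
          (mul_le_mul_of_nonneg_right hop (norm_nonneg y))
      have h2 : (n : ℝ) ^ α ≤ ((n : ℝ) + 1) ^ k := by
        have c1 : (n : ℝ) ^ α ≤ ((n : ℝ) + 1) ^ α :=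
          Real.rpow_le_rpow (Nat.cast_nonneg n) (by linarith) hα.le
        have c2 : ((n : ℝ) + 1) ^ α ≤ ((n : ℝ) + 1) ^ ((k : ℝ)) := by
          refine Real.rpow_le_rpow_of_exponent_le ?_ (Nat.le_ceil α)
          have : (0 : ℝ) ≤ (n : ℝ) := Nat.cast_nonneg n
          linarith
        have c3 : ((n : ℝ) + 1) ^ ((k : ℝ)) = ((n : ℝ) + 1) ^ (k : ℕ) :=
          Real.rpow_natCast _ k
        calc (n : ℝ) ^ α ≤ ((n : ℝ) + 1) ^ α := c1
          _ ≤ ((n : ℝ) + 1) ^ ((k : ℝ)) := c2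
          _ = ((n : ℝ) + 1) ^ (k : ℕ) := c3
      have h3 : (n : ℝ) ^ α * ‖(T ^ n) (u + v) - P (u + v)‖
          ≤ ((n : ℝ) + 1) ^ k * ((D / ((n : ℝ) + 1) ^ (k + 1)) * ‖y‖) :=
        mul_le_mul h2 h1 (norm_nonneg _) (by positivity)
      have heq : ((n : ℝ) + 1) ^ k * ((D / ((n : ℝ) + 1) ^ (k + 1)) * ‖y‖)
          = (D * ‖y‖) * (1 / ((n : ℝ) + 1)) := by
        have hne : ((n : ℝ) + 1) ≠ 0 := by positivity
        field_simp
        ring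
      rw [heq] at h3
      exact h3
    have hnn : ∀ n : ℕ, 0 ≤ (n : ℝ) ^ α * ‖(T ^ n) (u + v) - P (u + v)‖ := fun n =>
      mul_nonneg (Real.rpow_nonneg (Nat.cast_nonneg n) α) (norm_nonneg _)
    refine squeeze_zero hnn hgoal ?_
    have hl := tendsto_one_div_add_atTop_nhds_zero_nat.const_mul (D * ‖y‖)
    simpa using hl
end

section
/- Let X be a complex Hilbert space, let M₁, …, M_N (N ≥ 2) be closed subspaces of X, let P_k denote the orthogonal projection of X onto M_k, let M = M₁ ∩ … ∩ M_N with orthogonal projection P_M, and let T = P_N ⋯ P₁. Suppose ι ≥ 0 is a real number with 3ι² ≤ N³ such that for every n with 1 ≤ n ≤ N and every x ∈ M_n one has ∑_{k=1}^N dist(x, M_k)² ≥ ι² · dist(x, M)². Then for every x ∈ X and every n ≥ 0, ‖T^n x − P_M x‖ ≤ (1 − 3ι²/N³)^{n/2} · ‖x − P_M x‖. -/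
open Filter Topology
open scoped InnerProductSpace

/-- The orthogonal projection onto a subspace, as an endomorphism. -/
noncomputable def projOnto {X : Type*} [NormedAddCommGroup X] [InnerProductSpace ℂ X]
    (K : Submodule ℂ X) [K.HasOrthogonalProjection] : X →L[ℂ] X :=
  K.subtypeL.comp K.orthogonalProjectionOnto

section Aux
variable {X : Type*} [NormedAddCommGroup X] [InnerProductSpace ℂ X]

lemma projOnto_apply (K : Submodule ℂ X) [K.HasOrthogonalProjection] (x : X) :
    projOnto K x = (K.orthogonalProjectionOnto x : X) := rfl

lemma projOnto_mem (K : Submodule ℂ X) [K.HasOrthogonalProjection] (x : X) :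
    projOnto K x ∈ K := (K.orthogonalProjectionOnto x).2

lemma projOnto_eq_self {K : Submodule ℂ X} [K.HasOrthogonalProjection] {x : X} (h : x ∈ K) :
    projOnto K x = x := Submodule.starProjection_eq_self_iff.2 h

lemma norm_sq_projOnto (K : Submodule ℂ X) [K.HasOrthogonalProjection] (x : X) :
    ‖x‖ ^ 2 = ‖projOnto K x‖ ^ 2 + ‖x - projOnto K x‖ ^ 2 := by
  have h : ⟪x - projOnto K x, projOnto K x⟫_ℂ = 0 :=
    Submodule.starProjection_inner_eq_zero x _ (projOnto_mem K x)
  have := norm_add_sq_eq_norm_sq_add_norm_sq_of_inner_eq_zero _ _ h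
  rw [sub_add_cancel] at this
  nlinarith [this]

lemma projOnto_mem_orthogonal {J K : Submodule ℂ X} [K.HasOrthogonalProjection]
    (hJK : J ≤ K) {x : X} (hx : x ∈ Jᗮ) : projOnto K x ∈ Jᗮ := by
  rw [Submodule.mem_orthogonal] at hx ⊢
  intro u hu
  have h1 : ⟪projOnto K x, u⟫_ℂ = ⟪x, u⟫_ℂ := by
    rw [show projOnto K x = K.starProjection x from rfl, Submodule.inner_starProjection_left_eq_right,
      Submodule.starProjection_eq_self_iff.2 (hJK hu)]
  have h2 : ⟪x, u⟫_ℂ = 0 := by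
    rw [← inner_conj_symm, hx u hu, map_zero]
  rw [← inner_conj_symm, h1, h2, map_zero]

lemma infDist_eq_norm_of_mem_orthogonal {K : Submodule ℂ X} {x : X} (hx : x ∈ Kᗮ) :
    Metric.infDist x (K : Set X) = ‖x‖ := by
  rw [Submodule.mem_orthogonal] at hx
  refine le_antisymm ?_ ?_
  · simpa using Metric.infDist_le_dist_of_mem (K.zero_mem)
  · by_contra h
    push_neg at h
    obtain ⟨y, hy, hxy⟩ := (Metric.infDist_lt_iff ⟨0, K.zero_mem⟩).1 h
    have hinner : ⟪x, -y⟫_ℂ = 0 := by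
      rw [inner_neg_right, ← inner_conj_symm, hx y hy, map_zero, neg_zero]
    have := norm_add_sq_eq_norm_sq_add_norm_sq_of_inner_eq_zero _ _ hinner
    rw [← sub_eq_add_neg] at this
    rw [dist_eq_norm] at hxy
    nlinarith [norm_nonneg (x - y), norm_nonneg x]

end Aux

/-- The product `P_k ⋯ P_1` of the orthogonal projections onto the first `k` of the
subspaces `M 0, …, M (N-1)` (applied in order: first `P_1 = projOnto (M 0)`, etc.);
for `k = N` this is the operator `T = P_N ⋯ P_1` of the method of cyclic alternating
projections. -/
noncomputable def cycleProd {X : Type*} [NormedAddCommGroup X] [InnerProductSpace ℂ X]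
    {N : ℕ} (M : Fin N → Submodule ℂ X) [∀ i, CompleteSpace (M i)] (k : ℕ) :
    X →L[ℂ] X :=
  (((List.ofFn fun i => projOnto (M i)).take k).reverse).prod


section Cycle
variable {X : Type*} [NormedAddCommGroup X] [InnerProductSpace ℂ X]
  {N : ℕ} (M : Fin N → Submodule ℂ X) [∀ i, CompleteSpace (M i)]

lemma cycleProd_zero : cycleProd M 0 = 1 := by simp [cycleProd]

lemma cycleProd_succ (k : ℕ) (hk : k < N) :
    cycleProd M (k + 1) = projOnto (M ⟨k, hk⟩) * cycleProd M k := by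
  unfold cycleProd
  rw [List.take_succ]
  have : (List.ofFn fun i => projOnto (M i))[k]? = some (projOnto (M ⟨k, hk⟩)) := by
    simp [List.getElem?_ofFn, hk]
  rw [this]
  simp

end Cycle

section Main
variable {X : Type*} [NormedAddCommGroup X] [InnerProductSpace ℂ X] [CompleteSpace X]
  {N : ℕ} (M : Fin N → Submodule ℂ X) [∀ i, CompleteSpace (M i)]
  [CompleteSpace (⨅ i, M i : Submodule ℂ X)]

lemma cycleProd_mem_orthogonal {y : X} (hy : y ∈ (⨅ i, M i : Submodule ℂ X)ᗮ) :
    ∀ k, cycleProd M k y ∈ (⨅ i, M i : Submodule ℂ X)ᗮ := by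
  intro k
  induction k with
  | zero => simpa [cycleProd_zero] using hy
  | succ k ih =>
    by_cases hk : k < N
    · rw [cycleProd_succ M k hk]
      exact projOnto_mem_orthogonal (iInf_le M _) ih
    · -- take saturates
      have h1 : (List.ofFn fun i => projOnto (M i)).take (k+1)
          = (List.ofFn fun i => projOnto (M i)).take k := by
        rw [List.take_of_length_le, List.take_of_length_le] <;> simp <;> omega
      unfold cycleProd
      rw [h1]
      exact ih

lemma cycleProd_fixed {w : X} (hw : w ∈ (⨅ i, M i : Submodule ℂ X)) (k : ℕ) :
    cycleProd M k w = w := by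
  induction k with
  | zero => simp [cycleProd_zero]
  | succ k ih =>
    by_cases hk : k < N
    · rw [cycleProd_succ M k hk, ContinuousLinearMap.mul_apply, ih]
      exact projOnto_eq_self (by exact (Submodule.mem_iInf _).1 hw _)
    · have h1 : (List.ofFn fun i => projOnto (M i)).take (k+1)
          = (List.ofFn fun i => projOnto (M i)).take k := by
        rw [List.take_of_length_le, List.take_of_length_le] <;> simp <;> omega
      unfold cycleProd
      rw [h1]
      exact ih

lemma key_contraction (hN : 2 ≤ N)
    (ι : ℝ) (hι0 : 0 ≤ ι) (hιN : 3 * ι ^ 2 ≤ (N : ℝ) ^ 3)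
    (hincl : ∀ n : Fin N, ∀ x ∈ M n,
      ι ^ 2 * Metric.infDist x ((⨅ i, M i : Submodule ℂ X) : Set X) ^ 2 ≤
        ∑ k : Fin N, Metric.infDist x ((M k : Submodule ℂ X) : Set X) ^ 2)
    {y : X} (hy : y ∈ (⨅ i, M i : Submodule ℂ X)ᗮ) :
    ‖cycleProd M N y‖ ^ 2 ≤ (1 - 3 * ι ^ 2 / (N : ℝ) ^ 3) * ‖y‖ ^ 2 := by
  have hN0 : 0 < N := by omega
  set u : ℕ → X := fun k => cycleProd M k y with hu
  have hu0 : u 0 = y := by simp [hu, cycleProd_zero]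
  have husucc : ∀ k, (hk : k < N) → u (k+1) = projOnto (M ⟨k, hk⟩) (u k) := by
    intro k hk
    simp [hu, cycleProd_succ M k hk, ContinuousLinearMap.mul_apply]
  have hmem : ∀ k, (hk : k < N) → u (k+1) ∈ M ⟨k, hk⟩ := by
    intro k hk; rw [husucc k hk]; exact projOnto_mem _ _
  set e : ℕ → ℝ := fun j => ‖u j - u (j+1)‖ ^ 2 with he
  have he0 : ∀ j, 0 ≤ e j := fun j => sq_nonneg _
  have pyth : ∀ k, k < N → ‖u k‖ ^ 2 = ‖u (k+1)‖ ^ 2 + e k := by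
    intro k hk
    have := norm_sq_projOnto (M ⟨k, hk⟩) (u k)
    rwa [← husucc k hk] at this
  have tele : ∀ m, m ≤ N → ‖y‖ ^ 2 = ‖u m‖ ^ 2 + ∑ j ∈ Finset.range m, e j := by
    intro m
    induction m with
    | zero => simp [hu0]
    | succ m ih =>
      intro hm
      rw [Finset.sum_range_succ, ih (by omega), pyth m (by omega)]
      ring
  set E : ℝ := ∑ j ∈ Finset.Ico 1 N, e j with hE
  have hEnn : 0 ≤ E := Finset.sum_nonneg fun j _ => he0 j
  have hx1mem : u 1 ∈ M ⟨0, hN0⟩ := hmem 0 hN0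
  have hx1orth : u 1 ∈ (⨅ i, M i : Submodule ℂ X)ᗮ := cycleProd_mem_orthogonal M hy 1
  have hdist1 : Metric.infDist (u 1) ((⨅ i, M i : Submodule ℂ X) : Set X) = ‖u 1‖ :=
    infDist_eq_norm_of_mem_orthogonal hx1orth
  -- per-k distance bound
  have hdk : ∀ k : Fin N,
      Metric.infDist (u 1) ((M k : Submodule ℂ X) : Set X) ^ 2 ≤ ((N : ℝ) - 1) * E := by
    intro k
    have hkmem : u ((k:ℕ) + 1) ∈ M k := by
      have := hmem k k.isLt
      simpa using this
    have h1 : Metric.infDist (u 1) ((M k : Submodule ℂ X) : Set X) ≤ dist (u 1) (u ((k:ℕ)+1)) :=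
      Metric.infDist_le_dist_of_mem hkmem
    have h2 : dist (u 1) (u ((k:ℕ)+1)) ≤ ∑ j ∈ Finset.Ico 1 ((k:ℕ)+1), dist (u j) (u (j+1)) :=
      dist_le_Ico_sum_dist u (by omega)
    have h3 : (∑ j ∈ Finset.Ico 1 ((k:ℕ)+1), dist (u j) (u (j+1))) ^ 2
        ≤ ((Finset.Ico 1 ((k:ℕ)+1)).card : ℝ) * ∑ j ∈ Finset.Ico 1 ((k:ℕ)+1), e j := by
      have := sq_sum_le_card_mul_sum_sq (s := Finset.Ico 1 ((k:ℕ)+1))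
        (f := fun j => dist (u j) (u (j+1)))
      simp only [dist_eq_norm] at this ⊢
      simpa [he] using this
    have hcard : ((Finset.Ico 1 ((k:ℕ)+1)).card : ℝ) ≤ (N : ℝ) - 1 := by
      rw [Nat.card_Ico]
      have : (k : ℕ) + 1 - 1 ≤ N - 1 := by omega
      calc ((k:ℕ) + 1 - 1 : ℕ) ≤ ((N - 1 : ℕ) : ℝ) := by exact_mod_cast this
        _ ≤ (N : ℝ) - 1 := by
            have : ((N - 1 : ℕ) : ℝ) = (N : ℝ) - 1 := by
              have : (1:ℕ) ≤ N := by omega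
              push_cast [this]; ring
            linarith [this.le]
    have hsub : ∑ j ∈ Finset.Ico 1 ((k:ℕ)+1), e j ≤ E := by
      apply Finset.sum_le_sum_of_subset_of_nonneg
      · apply Finset.Ico_subset_Ico le_rfl; omega
      · intro j _ _; exact he0 j
    have hsumnn : 0 ≤ ∑ j ∈ Finset.Ico 1 ((k:ℕ)+1), e j :=
      Finset.sum_nonneg fun j _ => he0 j
    have hdnn : 0 ≤ Metric.infDist (u 1) ((M k : Submodule ℂ X) : Set X) :=
      Metric.infDist_nonneg
    calc Metric.infDist (u 1) ((M k : Submodule ℂ X) : Set X) ^ 2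
        ≤ (∑ j ∈ Finset.Ico 1 ((k:ℕ)+1), dist (u j) (u (j+1))) ^ 2 := by
          apply pow_le_pow_left₀ hdnn (le_trans h1 h2)
      _ ≤ ((Finset.Ico 1 ((k:ℕ)+1)).card : ℝ) * ∑ j ∈ Finset.Ico 1 ((k:ℕ)+1), e j := h3
      _ ≤ ((N : ℝ) - 1) * E := by
          have hN1 : (1:ℝ) ≤ (N:ℝ) := by exact_mod_cast hN0
          exact mul_le_mul hcard hsub hsumnn (by linarith)
  have hsum : ∑ k : Fin N, Metric.infDist (u 1) ((M k : Submodule ℂ X) : Set X) ^ 2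
      ≤ (N : ℝ) * (((N : ℝ) - 1) * E) := by
    calc ∑ k : Fin N, Metric.infDist (u 1) ((M k : Submodule ℂ X) : Set X) ^ 2
        ≤ ∑ _k : Fin N, ((N : ℝ) - 1) * E := Finset.sum_le_sum fun k _ => hdk k
      _ = (N : ℝ) * (((N : ℝ) - 1) * E) := by simp [Finset.sum_const, Finset.card_univ, mul_comm]
  have hmain : ι ^ 2 * ‖u 1‖ ^ 2 ≤ (N : ℝ) * (((N : ℝ) - 1) * E) := by
    have := hincl ⟨0, hN0⟩ (u 1) hx1mem
    rw [hdist1] at this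
    exact this.trans hsum
  have pyth0 : ‖y‖ ^ 2 = ‖u 1‖ ^ 2 + e 0 := by
    have := tele 1 (by omega)
    simpa using this
  have hNR : (2 : ℝ) ≤ (N : ℝ) := by exact_mod_cast hN
  have hcoef : (N : ℝ) * ((N : ℝ) - 1) ≤ (N : ℝ) ^ 3 / 3 := by nlinarith
  have hι2 : ι ^ 2 ≤ (N : ℝ) ^ 3 / 3 := by linarith
  have hsplit : E + e 0 = ∑ j ∈ Finset.range N, e j := by
    rw [Finset.range_eq_Ico, Finset.sum_eq_sum_Ico_succ_bot hN0]
    ring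
  have hteleN : ‖y‖ ^ 2 = ‖u N‖ ^ 2 + ∑ j ∈ Finset.range N, e j := tele N le_rfl
  have hfinal : ι ^ 2 * ‖y‖ ^ 2 ≤ ((N : ℝ) ^ 3 / 3) * (‖y‖ ^ 2 - ‖u N‖ ^ 2) := by
    have h1 : ι ^ 2 * ‖y‖ ^ 2 = ι ^ 2 * ‖u 1‖ ^ 2 + ι ^ 2 * e 0 := by rw [pyth0]; ring
    have h2 : ι ^ 2 * e 0 ≤ ((N : ℝ) ^ 3 / 3) * e 0 :=
      mul_le_mul_of_nonneg_right hι2 (he0 0)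
    have h3 : (N : ℝ) * (((N : ℝ) - 1) * E) ≤ ((N : ℝ) ^ 3 / 3) * E := by
      rw [← mul_assoc]
      exact mul_le_mul_of_nonneg_right hcoef hEnn
    have h4 : ‖y‖ ^ 2 - ‖u N‖ ^ 2 = E + e 0 := by rw [hsplit]; linarith [hteleN]
    calc ι ^ 2 * ‖y‖ ^ 2 = ι ^ 2 * ‖u 1‖ ^ 2 + ι ^ 2 * e 0 := h1
      _ ≤ (N : ℝ) * (((N : ℝ) - 1) * E) + ((N : ℝ) ^ 3 / 3) * e 0 := by linarith [hmain, h2]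
      _ ≤ ((N : ℝ) ^ 3 / 3) * E + ((N : ℝ) ^ 3 / 3) * e 0 := by linarith [h3]
      _ = ((N : ℝ) ^ 3 / 3) * (‖y‖ ^ 2 - ‖u N‖ ^ 2) := by rw [h4]; ring
  have hA : (0 : ℝ) < (N : ℝ) ^ 3 := by positivity
  have huN : cycleProd M N y = u N := rfl
  rw [huN, sub_mul, one_mul, le_sub_iff_add_le, div_mul_eq_mul_div, ← le_sub_iff_add_le',
    div_le_iff₀ hA] at *
  nlinarith [hfinal]

end Main

section Final
variable {X : Type*} [NormedAddCommGroup X] [InnerProductSpace ℂ X] [CompleteSpace X]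
  {N : ℕ} (M : Fin N → Submodule ℂ X) [∀ i, CompleteSpace (M i)]
  [CompleteSpace (⨅ i, M i : Submodule ℂ X)]

theorem alternatingProjections_rate_of_inner_l2_inclination'
    (hN : 2 ≤ N)
    (ι : ℝ) (hι0 : 0 ≤ ι) (hιN : 3 * ι ^ 2 ≤ (N : ℝ) ^ 3)
    (hincl : ∀ n : Fin N, ∀ x ∈ M n,
      ι ^ 2 * Metric.infDist x ((⨅ i, M i : Submodule ℂ X) : Set X) ^ 2 ≤
        ∑ k : Fin N, Metric.infDist x ((M k : Submodule ℂ X) : Set X) ^ 2) :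
    ∀ x : X, ∀ n : ℕ,
      ‖((cycleProd M N) ^ n) x - (projOnto (⨅ i, M i)) x‖ ≤
        (1 - 3 * ι ^ 2 / (N : ℝ) ^ 3) ^ ((n : ℝ) / 2) *
          ‖x - (projOnto (⨅ i, M i)) x‖ := by
  intro x n
  set c : ℝ := 1 - 3 * ι ^ 2 / (N : ℝ) ^ 3 with hc
  have hA : (0 : ℝ) < (N : ℝ) ^ 3 := by positivity
  have hc0 : 0 ≤ c := by
    rw [hc, sub_nonneg, div_le_one hA]; exact hιN
  set z : X := projOnto (⨅ i, M i) x with hz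
  set y : X := x - z with hy
  have hyorth : y ∈ (⨅ i, M i : Submodule ℂ X)ᗮ :=
    Submodule.sub_starProjection_mem_orthogonal x
  have hTz : ∀ m : ℕ, ((cycleProd M N) ^ m) z = z := by
    intro m
    induction m with
    | zero => simp
    | succ m ih =>
      rw [pow_succ, ContinuousLinearMap.mul_apply,
        cycleProd_fixed M (projOnto_mem _ _) N, ih]
  have hident : ((cycleProd M N) ^ n) x - z = ((cycleProd M N) ^ n) y := by
    rw [hy, map_sub, hTz n]
  have hpow_orth : ∀ m : ℕ, ((cycleProd M N) ^ m) y ∈ (⨅ i, M i : Submodule ℂ X)ᗮ := by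
    intro m
    induction m with
    | zero => simpa using hyorth
    | succ m ih =>
      rw [pow_succ', ContinuousLinearMap.mul_apply]
      exact cycleProd_mem_orthogonal M ih N
  have hiter : ∀ m : ℕ, ‖((cycleProd M N) ^ m) y‖ ^ 2 ≤ c ^ m * ‖y‖ ^ 2 := by
    intro m
    induction m with
    | zero => simp
    | succ m ih =>
      have h1 := key_contraction M hN ι hι0 hιN hincl (hpow_orth m)
      have hT : ((cycleProd M N) ^ (m+1)) y = cycleProd M N (((cycleProd M N) ^ m) y) := by
        rw [pow_succ', ContinuousLinearMap.mul_apply]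
      rw [hT]
      calc ‖cycleProd M N (((cycleProd M N) ^ m) y)‖ ^ 2
          ≤ c * ‖((cycleProd M N) ^ m) y‖ ^ 2 := h1
        _ ≤ c * (c ^ m * ‖y‖ ^ 2) := mul_le_mul_of_nonneg_left ih hc0
        _ = c ^ (m + 1) * ‖y‖ ^ 2 := by rw [pow_succ]; ring
  have hsq := Real.sqrt_le_sqrt (hiter n)
  rw [Real.sqrt_sq (norm_nonneg _)] at hsq
  have hrhs : Real.sqrt (c ^ n * ‖y‖ ^ 2) = c ^ ((n : ℝ) / 2) * ‖y‖ := by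
    rw [Real.sqrt_mul (by positivity), Real.sqrt_sq (norm_nonneg _)]
    congr 1
    rw [Real.sqrt_eq_rpow, ← Real.rpow_natCast c n, ← Real.rpow_mul hc0]
    congr 1
    ring
  rw [hrhs] at hsq
  rw [hident]
  exact hsq

end Final

/-- **Rate of convergence in terms of the inner ℓ²-inclination.** If `ι ≥ 0` with
`3ι² ≤ N³` satisfies `∑_k dist(x, M_k)² ≥ ι² dist(x, M)²` for every `x` in any of
the subspaces `M_n`, then `‖Tⁿx - P_M x‖ ≤ (1 - 3ι²/N³)^{n/2} ‖x - P_M x‖`. -/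
theorem alternatingProjections_rate_of_inner_l2_inclination
    {X : Type*} [NormedAddCommGroup X] [InnerProductSpace ℂ X] [CompleteSpace X]
    {N : ℕ} (hN : 2 ≤ N) (M : Fin N → Submodule ℂ X) [∀ i, CompleteSpace (M i)]
    [CompleteSpace (⨅ i, M i : Submodule ℂ X)]
    (ι : ℝ) (hι0 : 0 ≤ ι) (hιN : 3 * ι ^ 2 ≤ (N : ℝ) ^ 3)
    (hincl : ∀ n : Fin N, ∀ x ∈ M n,
      ι ^ 2 * Metric.infDist x ((⨅ i, M i : Submodule ℂ X) : Set X) ^ 2 ≤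
        ∑ k : Fin N, Metric.infDist x ((M k : Submodule ℂ X) : Set X) ^ 2) :
    ∀ x : X, ∀ n : ℕ,
      ‖((cycleProd M N) ^ n) x - (projOnto (⨅ i, M i)) x‖ ≤
        (1 - 3 * ι ^ 2 / (N : ℝ) ^ 3) ^ ((n : ℝ) / 2) *
          ‖x - (projOnto (⨅ i, M i)) x‖ := by
  exact alternatingProjections_rate_of_inner_l2_inclination' M hN ι hι0 hιN hincl
end

section
/- Let X be a complex Hilbert space, let M₁, …, M_N (N ≥ 2) be closed subspaces of X with M = M₁ ∩ … ∩ M_N ≠ X, let P_k denote the orthogonal projection of X onto M_k, let P_M denote the orthogonal projection onto M, and let T = P_N ⋯ P₁. If the subspace M₁^⊥ + ⋯ + M_N^⊥ is closed in X, then there exist constants C > 0 and r ∈ [0, 1) such that ‖T^n − P_M‖ ≤ C rⁿ for all n ≥ 0 (exponentially fast convergence); if M₁^⊥ + ⋯ + M_N^⊥ is not closed in X, then the convergence is arbitrarily slow: for every sequence (r_n) of positive real numbers with r_n → 0 as n → ∞ there exists x ∈ X such that ‖T^n x − P_M x‖ ≥ r_n for all n ≥ 0. -/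
set_option linter.unusedSectionVars false
open Filter Topology
open scoped ComplexInnerProductSpace

namespace AltProj

variable {X : Type*} [NormedAddCommGroup X] [InnerProductSpace ℂ X]

section Proj
variable (K : Submodule ℂ X) [K.HasOrthogonalProjection]

lemma projOnto_mem (x : X) : projOnto K x ∈ K := (K.orthogonalProjectionOnto x).2

lemma sub_projOnto_mem (x : X) : x - projOnto K x ∈ Kᗮ :=
  K.sub_starProjection_mem_orthogonal x

lemma projOnto_eq_self {x : X} (h : x ∈ K) : projOnto K x = x :=
  Submodule.starProjection_eq_self_iff.2 h

lemma projOnto_eq_zero {x : X} (h : x ∈ Kᗮ) : projOnto K x = 0 := by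
  have h2 : x - projOnto K x ∈ Kᗮ := sub_projOnto_mem K x
  have h3 : projOnto K x ∈ Kᗮ := by
    have := Kᗮ.sub_mem h h2
    simpa using this
  have h4 : projOnto K x ∈ K := projOnto_mem K x
  have := Submodule.inner_right_of_mem_orthogonal h4 h3
  rwa [inner_self_eq_zero] at this

lemma mem_orth_iff_projOnto (x : X) : x ∈ Kᗮ ↔ projOnto K x = 0 := by
  refine ⟨projOnto_eq_zero K, fun h => ?_⟩
  have := sub_projOnto_mem K x
  rwa [h, sub_zero] at this

lemma norm_sq_projOnto (x : X) :
    ‖projOnto K x‖ ^ 2 + ‖x - projOnto K x‖ ^ 2 = ‖x‖ ^ 2 := by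
  have h0 : (inner ℂ (projOnto K x) (x - projOnto K x) : ℂ) = 0 :=
    Submodule.inner_right_of_mem_orthogonal (projOnto_mem K x) (sub_projOnto_mem K x)
  have := norm_add_sq_eq_norm_sq_add_norm_sq_of_inner_eq_zero _ _ h0
  rw [add_sub_cancel] at this
  linarith

lemma norm_projOnto_le (x : X) : ‖projOnto K x‖ ≤ ‖x‖ := by
  have := norm_sq_projOnto K x
  nlinarith [norm_nonneg (projOnto K x), norm_nonneg x, sq_nonneg ‖x - projOnto K x‖]

lemma norm_sub_projOnto_le (x : X) : ‖x - projOnto K x‖ ≤ ‖x‖ := by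
  have := norm_sq_projOnto K x
  nlinarith [norm_nonneg (x - projOnto K x), norm_nonneg x, sq_nonneg ‖projOnto K x‖]

lemma norm_sub_projOnto_min (x : X) {m : X} (hm : m ∈ K) :
    ‖x - projOnto K x‖ ≤ ‖x - m‖ := by
  have h0 : (inner ℂ (x - projOnto K x) (projOnto K x - m) : ℂ) = 0 :=
    Submodule.inner_left_of_mem_orthogonal (K.sub_mem (projOnto_mem K x) hm)
      (sub_projOnto_mem K x)
  have h1 := norm_add_sq_eq_norm_sq_add_norm_sq_of_inner_eq_zero _ _ h0
  have h2 : x - projOnto K x + (projOnto K x - m) = x - m := by abel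
  rw [h2] at h1
  nlinarith [norm_nonneg (x - projOnto K x), norm_nonneg (x - m),
    sq_nonneg ‖projOnto K x - m‖]

end Proj

section Cycle
variable {N : ℕ} (M : Fin N → Submodule ℂ X) [∀ i, CompleteSpace (M i)]

lemma cycleProd_zero : cycleProd M 0 = 1 := by
  simp [cycleProd]

lemma cycleProd_succ {k : ℕ} (h : k < N) :
    cycleProd M (k + 1) = projOnto (M ⟨k, h⟩) * cycleProd M k := by
  have hlen : k < (List.ofFn fun i => projOnto (M i)).length := by
    simpa using h
  rw [cycleProd, cycleProd, List.take_succ, List.getElem?_eq_getElem hlen]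
  simp [List.prod_append, List.getElem_ofFn]

lemma cycleProd_of_ge {k : ℕ} (h : N ≤ k) : cycleProd M k = cycleProd M N := by
  rw [cycleProd, cycleProd]
  rw [List.take_of_length_le (by simpa using h), List.take_of_length_le (by simp)]

lemma norm_cycleProd_apply_le (k : ℕ) (x : X) : ‖cycleProd M k x‖ ≤ ‖x‖ := by
  induction k with
  | zero => simp [cycleProd_zero]
  | succ k ih =>
    by_cases h : k < N
    · rw [cycleProd_succ M h]
      exact le_trans (norm_projOnto_le _ _) ih
    · push_neg at h
      rw [cycleProd_of_ge M (le_trans h (Nat.le_succ k)), ← cycleProd_of_ge M h]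
      exact ih

lemma cycleProd_fixed {x : X} (hx : x ∈ ⨅ i, M i) (k : ℕ) : cycleProd M k x = x := by
  induction k with
  | zero => simp [cycleProd_zero]
  | succ k ih =>
    by_cases h : k < N
    · rw [cycleProd_succ M h, ContinuousLinearMap.mul_apply, ih]
      exact projOnto_eq_self _ ((Submodule.mem_iInf M).1 hx ⟨k, h⟩)
    · push_neg at h
      rw [cycleProd_of_ge M (le_trans h (Nat.le_succ k)), ← cycleProd_of_ge M h]
      exact ih

lemma sub_cycleProd_succ_mem {k : ℕ} (h : k < N) (x : X) :
    cycleProd M k x - cycleProd M (k + 1) x ∈ (M ⟨k, h⟩)ᗮ := by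
  rw [cycleProd_succ M h, ContinuousLinearMap.mul_apply]
  exact sub_projOnto_mem _ _

lemma sub_cycleProd_telescope (x : X) :
    ∑ k ∈ Finset.range N, (cycleProd M k x - cycleProd M (k + 1) x)
      = x - cycleProd M N x := by
  rw [Finset.sum_range_sub' (fun k => cycleProd M k x) N, cycleProd_zero]
  simp

lemma sub_cycleProd_mem_orth (x : X) : x - cycleProd M N x ∈ (⨅ i, M i)ᗮ := by
  rw [← sub_cycleProd_telescope M x]
  refine Submodule.sum_mem _ fun k hk => ?_
  have hkN : k < N := Finset.mem_range.1 hk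
  exact Submodule.orthogonal_le (iInf_le M ⟨k, hkN⟩) (sub_cycleProd_succ_mem M hkN x)

end Cycle

lemma arith_contract {a b D nc nn ms : ℝ} (ha : 0 < a) (hb : 0 ≤ b) (hD : 0 ≤ D)
    (hnc : 0 ≤ nc) (hnn : 0 ≤ nn) (hms : 1 ≤ ms) (hsle : nc ^ 2 * nn ≤ ms)
    (h1 : a ^ 2 ≤ nc * a * D) (h2 : D ^ 2 ≤ nn * (a ^ 2 - b ^ 2)) (h3 : b ≤ a) :
    b ^ 2 ≤ (1 - 1 / ms) * a ^ 2 := by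
  have hms0 : (0 : ℝ) < ms := lt_of_lt_of_le one_pos hms
  have hS : 0 ≤ a ^ 2 - b ^ 2 := by nlinarith
  have h4 : a ^ 4 ≤ (nc * a * D) ^ 2 := by nlinarith [sq_nonneg (nc * a * D - a ^ 2)]
  have h5 : (nc * a * D) ^ 2 = nc ^ 2 * a ^ 2 * D ^ 2 := by ring
  have h6 : nc ^ 2 * a ^ 2 * D ^ 2 ≤ nc ^ 2 * a ^ 2 * (nn * (a ^ 2 - b ^ 2)) :=
    mul_le_mul_of_nonneg_left h2 (by positivity)
  have h7 : nc ^ 2 * a ^ 2 * (nn * (a ^ 2 - b ^ 2)) ≤ ms * (a ^ 2 * (a ^ 2 - b ^ 2)) := by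
    have e : nc ^ 2 * a ^ 2 * (nn * (a ^ 2 - b ^ 2)) = (nc ^ 2 * nn) * (a ^ 2 * (a ^ 2 - b ^ 2)) := by
      ring
    rw [e]
    exact mul_le_mul_of_nonneg_right hsle (by positivity)
  have h8 : a ^ 4 ≤ ms * (a ^ 2 * (a ^ 2 - b ^ 2)) := by linarith
  have h9 : a ^ 2 ≤ ms * (a ^ 2 - b ^ 2) := by
    have ha2 : 0 < a ^ 2 := by positivity
    nlinarith
  have h10 : a ^ 2 / ms ≤ a ^ 2 - b ^ 2 := by
    rw [div_le_iff₀ hms0]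
    nlinarith
  have : 1 / ms * a ^ 2 = a ^ 2 / ms := by ring
  nlinarith

section TP
variable [CompleteSpace X] {N : ℕ} (M : Fin N → Submodule ℂ X) [∀ i, CompleteSpace (M i)]
  [CompleteSpace (⨅ i, M i : Submodule ℂ X)]

local notation "T" => cycleProd M N
local notation "PM" => projOnto (⨅ i, M i)

lemma T_PM (y : X) : T (PM y) = PM y :=
  cycleProd_fixed M (projOnto_mem _ y) N

lemma Tpow_PM (n : ℕ) (y : X) : (T ^ n) (PM y) = PM y := by
  induction n with
  | zero => simp
  | succ n ih => rw [pow_succ, ContinuousLinearMap.mul_apply, T_PM, ih]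

lemma PM_T (y : X) : PM (T y) = PM y := by
  have h : PM (y - T y) = 0 := projOnto_eq_zero _ (sub_cycleProd_mem_orth M y)
  rw [map_sub] at h
  linear_combination (norm := abel) -h

lemma PM_Tpow (n : ℕ) (y : X) : PM ((T ^ n) y) = PM y := by
  induction n with
  | zero => simp
  | succ n ih => rw [pow_succ', ContinuousLinearMap.mul_apply, PM_T, ih]

lemma Tpow_sub_PM (n : ℕ) (y : X) :
    (T ^ n) y - PM y = (T ^ n) (y - PM y) := by
  rw [map_sub, Tpow_PM]

lemma norm_Tpow_apply_le (n : ℕ) (y : X) : ‖(T ^ n) y‖ ≤ ‖y‖ := by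
  induction n with
  | zero => simp
  | succ n ih =>
    rw [pow_succ', ContinuousLinearMap.mul_apply]
    exact le_trans (norm_cycleProd_apply_le M N _) ih

lemma norm_Tpow_anti {m n : ℕ} (h : m ≤ n) (y : X) :
    ‖(T ^ n) y‖ ≤ ‖(T ^ m) y‖ := by
  obtain ⟨k, rfl⟩ := Nat.exists_eq_add_of_le h
  rw [add_comm, pow_add, ContinuousLinearMap.mul_apply]
  exact norm_Tpow_apply_le M k _

lemma T_mem_orth {y : X} (hy : y ∈ (⨅ i, M i : Submodule ℂ X)ᗮ) :
    T y ∈ (⨅ i, M i : Submodule ℂ X)ᗮ := by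
  rw [mem_orth_iff_projOnto] at hy ⊢
  rw [PM_T, hy]

lemma Tpow_mem_orth (k : ℕ) {y : X} (hy : y ∈ (⨅ i, M i : Submodule ℂ X)ᗮ) :
    (T ^ k) y ∈ (⨅ i, M i : Submodule ℂ X)ᗮ := by
  rw [mem_orth_iff_projOnto] at hy ⊢
  rw [PM_Tpow, hy]

lemma one_sub_T_decomp (y : X) :
    y - T y = ∑ i : Fin N, (cycleProd M ↑i - cycleProd M (↑i + 1)) y := by
  rw [Fin.sum_univ_eq_sum_range (fun k => (cycleProd M k - cycleProd M (k + 1)) y) N]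
  rw [← sub_cycleProd_telescope M y]
  exact Finset.sum_congr rfl fun k _ => by simp

lemma contract_imp_le_sup (m : ℕ) (c : ℝ) (hc : c < 1)
    (hcon : ∀ x ∈ (⨅ i, M i : Submodule ℂ X)ᗮ, ‖(T ^ m) x‖ ≤ c * ‖x‖) :
    (⨅ i, M i : Submodule ℂ X)ᗮ ≤ ⨆ i, (M i)ᗮ := by
  intro x hx
  by_cases hx0 : x = 0
  · simp [hx0, Submodule.zero_mem]
  have hxn : 0 < ‖x‖ := norm_pos_iff.2 hx0
  have hc0 : 0 ≤ c := by
    have h1 := hcon x hx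
    have h2 : (0:ℝ) ≤ ‖(T ^ m) x‖ := norm_nonneg _
    nlinarith
  set g : ℕ → X := fun a => (T ^ (m * a)) x with hg
  have hgsucc : ∀ a, g (a + 1) = (T ^ m) (g a) := by
    intro a
    simp only [hg]
    rw [← ContinuousLinearMap.mul_apply, ← pow_add, Nat.mul_succ, add_comm]
  have hgmem : ∀ a, g a ∈ (⨅ i, M i : Submodule ℂ X)ᗮ := fun a => Tpow_mem_orth M _ hx
  have hgnorm : ∀ a, ‖g a‖ ≤ c ^ a * ‖x‖ := by
    intro a
    induction a with
    | zero => simp [hg]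
    | succ a ih =>
      rw [hgsucc a]
      calc ‖(T ^ m) (g a)‖ ≤ c * ‖g a‖ := hcon _ (hgmem a)
        _ ≤ c * (c ^ a * ‖x‖) := by
            exact mul_le_mul_of_nonneg_left ih hc0
        _ = c ^ (a + 1) * ‖x‖ := by ring
  -- components
  set G : Fin N → (X →L[ℂ] X) := fun i =>
    ∑ l ∈ Finset.range m, (cycleProd M ↑i - cycleProd M (↑i + 1)) * (T ^ l) with hG
  have hGmem : ∀ (i : Fin N) (y : X), G i y ∈ (M i)ᗮ := by
    intro i y
    rw [hG]
    simp only [ContinuousLinearMap.sum_apply, ContinuousLinearMap.mul_apply]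
    refine Submodule.sum_mem _ fun l _ => ?_
    have h := sub_cycleProd_succ_mem M i.2 ((T ^ l) y)
    simpa using h
  have hGnorm : ∀ (i : Fin N) (y : X), ‖G i y‖ ≤ 2 * m * ‖y‖ := by
    intro i y
    rw [hG]
    simp only [ContinuousLinearMap.sum_apply, ContinuousLinearMap.mul_apply]
    calc ‖∑ l ∈ Finset.range m, (cycleProd M ↑i - cycleProd M (↑i + 1)) ((T ^ l) y)‖
        ≤ ∑ l ∈ Finset.range m, ‖(cycleProd M ↑i - cycleProd M (↑i + 1)) ((T ^ l) y)‖ :=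
          norm_sum_le _ _
      _ ≤ ∑ l ∈ Finset.range m, 2 * ‖y‖ := by
          refine Finset.sum_le_sum fun l _ => ?_
          rw [ContinuousLinearMap.sub_apply]
          calc ‖cycleProd M ↑i ((T ^ l) y) - cycleProd M (↑i + 1) ((T ^ l) y)‖
              ≤ ‖cycleProd M ↑i ((T ^ l) y)‖ + ‖cycleProd M (↑i + 1) ((T ^ l) y)‖ :=
                norm_sub_le _ _
            _ ≤ ‖(T ^ l) y‖ + ‖(T ^ l) y‖ := by
                exact add_le_add (norm_cycleProd_apply_le M _ _) (norm_cycleProd_apply_le M _ _)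
            _ ≤ ‖y‖ + ‖y‖ := by
                have := norm_Tpow_apply_le M l y
                exact add_le_add this this
            _ = 2 * ‖y‖ := by ring
      _ = 2 * m * ‖y‖ := by
          rw [Finset.sum_const, Finset.card_range, nsmul_eq_mul]; ring
  have hdecomp : ∀ y : X, y - (T ^ m) y = ∑ i : Fin N, G i y := by
    intro y
    have h1 : y - (T ^ m) y = ∑ l ∈ Finset.range m, ((T ^ l) y - (T ^ (l + 1)) y) := by
      rw [Finset.sum_range_sub' (fun l => (T ^ l) y) m]
      simp
    rw [h1, hG]
    have h2 : ∀ l, (T ^ l) y - (T ^ (l + 1)) y = ∑ i : Fin N,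
        (cycleProd M ↑i - cycleProd M (↑i + 1)) ((T ^ l) y) := by
      intro l
      have h3 : (T ^ (l + 1)) y = T ((T ^ l) y) := by
        rw [pow_succ', ContinuousLinearMap.mul_apply]
      rw [h3, one_sub_T_decomp M ((T ^ l) y)]
    simp only [ContinuousLinearMap.sum_apply, ContinuousLinearMap.mul_apply]
    rw [Finset.sum_congr rfl fun l _ => h2 l, Finset.sum_comm]
  -- summability
  have hfi : ∀ i : Fin N, Summable (fun a => G i (g a)) := by
    intro i
    refine Summable.of_norm_bounded (g := fun a => c ^ a * (2 * m * ‖x‖))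
      (((summable_geometric_of_lt_one hc0 hc).mul_right _)) fun a => ?_
    calc ‖G i (g a)‖ ≤ 2 * m * ‖g a‖ := hGnorm i (g a)
      _ ≤ 2 * m * (c ^ a * ‖x‖) := by
          refine mul_le_mul_of_nonneg_left (hgnorm a) (by positivity)
      _ = c ^ a * (2 * m * ‖x‖) := by ring
  set v : Fin N → X := fun i => ∑' a, G i (g a) with hv
  have hvsum : ∀ i : Fin N, HasSum (fun a => G i (g a)) (v i) := fun i => (hfi i).hasSum
  have hvmem : ∀ i : Fin N, v i ∈ (M i)ᗮ := by
    intro i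
    have htd := (hvsum i).tendsto_sum_nat
    refine (M i).isClosed_orthogonal.mem_of_tendsto htd ?_
    exact Eventually.of_forall fun n => Submodule.sum_mem _ fun a _ => hGmem i (g a)
  -- telescoping sum
  have htel : HasSum (fun a => g a - g (a + 1)) x := by
    have hsum : Summable (fun a => g a - g (a + 1)) := by
      refine Summable.of_norm_bounded (g := fun a => c ^ a * (2 * ‖x‖))
        ((summable_geometric_of_lt_one hc0 hc).mul_right _) fun a => ?_
      calc ‖g a - g (a + 1)‖ ≤ ‖g a‖ + ‖g (a + 1)‖ := norm_sub_le _ _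
        _ ≤ c ^ a * ‖x‖ + c ^ (a + 1) * ‖x‖ := add_le_add (hgnorm a) (hgnorm (a + 1))
        _ ≤ c ^ a * ‖x‖ + c ^ a * ‖x‖ := by
            have : c ^ (a + 1) ≤ c ^ a := by
              calc c ^ (a + 1) = c * c ^ a := by ring
                _ ≤ 1 * c ^ a := by
                    exact mul_le_mul_of_nonneg_right hc.le (pow_nonneg hc0 a)
                _ = c ^ a := one_mul _
            nlinarith [norm_nonneg x]
        _ = c ^ a * (2 * ‖x‖) := by ring
    rw [hsum.hasSum_iff_tendsto_nat]
    have heq : ∀ n : ℕ, ∑ a ∈ Finset.range n, (g a - g (a + 1)) = x - g n := by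
      intro n
      rw [Finset.sum_range_sub' g n]
      simp [hg]
    simp only [heq]
    have hg0 : Tendsto g atTop (𝓝 0) := by
      have hlim : Tendsto (fun n : ℕ => c ^ n * ‖x‖) atTop (𝓝 0) := by
        have := tendsto_pow_atTop_nhds_zero_of_lt_one hc0 hc
        simpa using this.mul_const ‖x‖
      exact squeeze_zero_norm hgnorm hlim
    have h5 : Tendsto (fun n : ℕ => x - g n) atTop (𝓝 (x - 0)) :=
      Tendsto.sub tendsto_const_nhds hg0
    simpa using h5
  have htel2 : HasSum (fun a => g a - g (a + 1)) (∑ i : Fin N, v i) := by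
    have hpt : ∀ a, g a - g (a + 1) = ∑ i : Fin N, G i (g a) := by
      intro a
      rw [hgsucc a]
      exact hdecomp (g a)
    rw [funext hpt]
    exact hasSum_sum fun i _ => hvsum i
  have hxv : x = ∑ i : Fin N, v i := htel.unique htel2
  rw [hxv]
  exact Submodule.sum_mem _ fun i _ => le_iSup (fun i => (M i)ᗮ) i (hvmem i)

lemma sup_orth_eq_of_isClosed
    (hcl : IsClosed ((⨆ i, (M i)ᗮ : Submodule ℂ X) : Set X)) :
    (⨆ i, (M i)ᗮ : Submodule ℂ X) = (⨅ i, M i : Submodule ℂ X)ᗮ := by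
  have e1 : ⨅ i, ((M i)ᗮ)ᗮ = (⨆ i, (M i)ᗮ : Submodule ℂ X)ᗮ :=
    Submodule.iInf_orthogonal _
  have e2 : (⨆ i, (M i)ᗮ : Submodule ℂ X)ᗮ = ⨅ i, M i := by
    rw [← e1]
    exact iInf_congr fun i => Submodule.orthogonal_orthogonal (M i)
  calc (⨆ i, (M i)ᗮ : Submodule ℂ X)
      = (⨆ i, (M i)ᗮ : Submodule ℂ X).topologicalClosure :=
        (hcl.submodule_topologicalClosure_eq).symm
    _ = (⨆ i, (M i)ᗮ : Submodule ℂ X)ᗮᗮ :=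
        (Submodule.orthogonal_orthogonal_eq_closure _).symm
    _ = (⨅ i, M i : Submodule ℂ X)ᗮ := by rw [e2]

set_option maxHeartbeats 1000000 in
lemma exists_contract_of_isClosed
    (hcl : IsClosed ((⨆ i, (M i)ᗮ : Submodule ℂ X) : Set X)) :
    ∃ r : ℝ, 0 ≤ r ∧ r < 1 ∧
      ∀ x ∈ (⨅ i, M i : Submodule ℂ X)ᗮ, ‖T x‖ ≤ r * ‖x‖ := by
  classical
  set W : Submodule ℂ X := (⨅ i, M i : Submodule ℂ X)ᗮ with hW
  set Φ₀ : (∀ i : Fin N, ((M i)ᗮ : Submodule ℂ X)) →L[ℂ] X :=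
    ∑ i : Fin N, ((M i)ᗮ).subtypeL.comp (ContinuousLinearMap.proj i) with hΦ₀
  have hΦ₀app : ∀ u, Φ₀ u = ∑ i : Fin N, ((u i : X)) := by
    intro u
    rw [hΦ₀]
    simp [ContinuousLinearMap.sum_apply]
  have hle : ∀ i : Fin N, ((M i)ᗮ : Submodule ℂ X) ≤ W :=
    fun i => Submodule.orthogonal_le (iInf_le M i)
  have hmemW : ∀ u, Φ₀ u ∈ W := by
    intro u
    rw [hΦ₀app]
    exact Submodule.sum_mem _ fun i _ => hle i (u i).2
  set Φ : (∀ i : Fin N, ((M i)ᗮ : Submodule ℂ X)) →L[ℂ] W :=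
    Φ₀.codRestrict W hmemW with hΦ
  have hsurj : Function.Surjective Φ := by
    intro y
    have hy : (y : X) ∈ ⨆ i, (M i)ᗮ := by
      rw [sup_orth_eq_of_isClosed M hcl]
      exact y.2
    have hrange : (⨆ i, (M i)ᗮ : Submodule ℂ X) ≤ LinearMap.range (Φ₀.toLinearMap) := by
      refine iSup_le fun i z hz => LinearMap.mem_range.2 ⟨Pi.single i ⟨z, hz⟩, ?_⟩
      show Φ₀ _ = z
      rw [hΦ₀app]
      rw [Finset.sum_eq_single i]
      · simp
      · intro j _ hj
        rw [Pi.single_eq_of_ne hj]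
        simp
      · intro h
        exact absurd (Finset.mem_univ i) h
    obtain ⟨u, hu⟩ := LinearMap.mem_range.1 (hrange hy)
    exact ⟨u, Subtype.ext (by simpa [hΦ] using hu)⟩
  obtain ⟨C, hC0, hCp⟩ := Φ.exists_preimage_norm_le hsurj
  set s : ℝ := (N : ℝ) ^ 3 * C ^ 2 with hs
  set ms : ℝ := max 1 s with hms
  have hms1 : (1 : ℝ) ≤ ms := le_max_left _ _
  have hms0 : (0 : ℝ) < ms := lt_of_lt_of_le one_pos hms1
  have key : ∀ x ∈ W, ‖T x‖ ^ 2 ≤ (1 - 1 / ms) * ‖x‖ ^ 2 := by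
    intro x hx
    by_cases hx0 : x = 0
    · simp [hx0]
    have hxn : 0 < ‖x‖ := norm_pos_iff.2 hx0
    obtain ⟨u, hu, hunorm⟩ := hCp ⟨x, hx⟩
    have hunorm' : ‖u‖ ≤ C * ‖x‖ := hunorm
    have hxsum : x = ∑ i : Fin N, ((u i : X)) := by
      have := congrArg (Subtype.val) hu
      rw [← hΦ₀app]
      exact this.symm
    set d : ℕ → ℝ := fun j => ‖cycleProd M j x - cycleProd M (j + 1) x‖ with hd
    have hstep : ∀ j, j < N →
        d j ^ 2 = ‖cycleProd M j x‖ ^ 2 - ‖cycleProd M (j + 1) x‖ ^ 2 := by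
      intro j hj
      have h1 := norm_sq_projOnto (M ⟨j, hj⟩) (cycleProd M j x)
      have h2 : cycleProd M (j + 1) x = projOnto (M ⟨j, hj⟩) (cycleProd M j x) := by
        rw [cycleProd_succ M hj, ContinuousLinearMap.mul_apply]
      rw [hd]
      simp only [h2]
      linarith
    have hsum_sq : ∑ j ∈ Finset.range N, d j ^ 2 = ‖x‖ ^ 2 - ‖T x‖ ^ 2 := by
      have h3 : ∑ j ∈ Finset.range N, d j ^ 2
          = ∑ j ∈ Finset.range N, (‖cycleProd M j x‖ ^ 2 - ‖cycleProd M (j + 1) x‖ ^ 2) :=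
        Finset.sum_congr rfl fun j hj => hstep j (Finset.mem_range.1 hj)
      rw [h3, Finset.sum_range_sub' (fun j => ‖cycleProd M j x‖ ^ 2) N, cycleProd_zero]
      simp
    set D : ℝ := ∑ j ∈ Finset.range N, d j with hD
    have hDnn : 0 ≤ D := Finset.sum_nonneg fun j _ => norm_nonneg _
    have hD2 : D ^ 2 ≤ (N : ℝ) * (‖x‖ ^ 2 - ‖T x‖ ^ 2) := by
      have := sq_sum_le_card_mul_sum_sq (s := Finset.range N) (f := d)
      rw [Finset.card_range, hsum_sq] at this
      exact this
    have hdist : ∀ i : Fin N, ‖x - projOnto (M i) x‖ ≤ D := by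
      intro i
      have hmem : cycleProd M (↑i + 1) x ∈ M i := by
        rw [cycleProd_succ M i.2, ContinuousLinearMap.mul_apply]
        have := projOnto_mem (M ⟨↑i, i.2⟩) (cycleProd M ↑i x)
        simpa using this
      refine le_trans (norm_sub_projOnto_min (M i) x hmem) ?_
      have htel : x - cycleProd M (↑i + 1) x
          = ∑ j ∈ Finset.range (↑i + 1), (cycleProd M j x - cycleProd M (j + 1) x) := by
        rw [Finset.sum_range_sub' (fun j => cycleProd M j x) (↑i + 1), cycleProd_zero]
        simp
      rw [htel]
      refine le_trans (norm_sum_le _ _) ?_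
      rw [hD]
      refine Finset.sum_le_sum_of_subset_of_nonneg ?_ fun j _ _ => norm_nonneg _
      exact Finset.range_subset_range.2 i.2
    have hinner : ‖x‖ ^ 2 ≤ ((N : ℝ) * C * ‖x‖) * D := by
      have h4 : RCLike.re (@inner ℂ X _ x x) = ‖x‖ ^ 2 := inner_self_eq_norm_sq (𝕜 := ℂ) x
      have h5 : RCLike.re (@inner ℂ X _ (∑ i : Fin N, ((u i : X))) x) = ‖x‖ ^ 2 := by
        rw [← hxsum]
        exact h4
      have h6 : ∀ i : Fin N, RCLike.re (@inner ℂ X _ ((u i : X)) x)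
          ≤ (C * ‖x‖) * D := by
        intro i
        have h7 : (@inner ℂ X _ ((u i : X)) x)
            = (@inner ℂ X _ ((u i : X)) (x - projOnto (M i) x)) := by
          have h8 : (@inner ℂ X _ ((u i : X)) (projOnto (M i) x)) = 0 :=
            Submodule.inner_left_of_mem_orthogonal (projOnto_mem (M i) x) (u i).2
          rw [inner_sub_right, h8, sub_zero]
        rw [h7]
        refine le_trans (re_inner_le_norm _ _) ?_
        have h9 : ‖(u i : X)‖ ≤ C * ‖x‖ := by
          refine le_trans ?_ hunorm'
          exact le_trans (norm_le_pi_norm u i) le_rfl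
        exact mul_le_mul h9 (hdist i) (norm_nonneg _) (by positivity)
      calc ‖x‖ ^ 2 = RCLike.re (@inner ℂ X _ (∑ i : Fin N, ((u i : X))) x) := h5.symm
        _ = ∑ i : Fin N, RCLike.re (@inner ℂ X _ ((u i : X)) x) := by
            rw [sum_inner, map_sum]
        _ ≤ ∑ i : Fin N, (C * ‖x‖) * D := Finset.sum_le_sum fun i _ => h6 i
        _ = (N : ℝ) * ((C * ‖x‖) * D) := by
            rw [Finset.sum_const, Finset.card_univ, Fintype.card_fin, nsmul_eq_mul]
        _ = ((N : ℝ) * C * ‖x‖) * D := by ring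
    -- combine
    have hTle : ‖T x‖ ≤ ‖x‖ := norm_cycleProd_apply_le M N x
    have hsle : ((N : ℝ) * C) ^ 2 * (N : ℝ) ≤ ms := by
      have : ((N : ℝ) * C) ^ 2 * (N : ℝ) = s := by rw [hs]; ring
      rw [this]
      exact le_max_right _ _
    have h1' : ‖x‖ ^ 2 ≤ ((N : ℝ) * C) * ‖x‖ * D := by
      calc ‖x‖ ^ 2 ≤ ((N : ℝ) * C * ‖x‖) * D := hinner
        _ = ((N : ℝ) * C) * ‖x‖ * D := by ring
    exact AltProj.arith_contract hxn (norm_nonneg (T x)) hDnn (by positivity)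
      (by positivity) hms1 hsle h1' hD2 hTle
  refine ⟨Real.sqrt (1 - 1 / ms), Real.sqrt_nonneg _, ?_, ?_⟩
  · have h1 : 0 < 1 / ms := by positivity
    have h2 : 1 - 1 / ms < 1 := by linarith
    have h3 : 0 ≤ 1 - 1 / ms := by
      have : 1 / ms ≤ 1 := by
        rw [div_le_one hms0]
        exact hms1
      linarith
    nlinarith [Real.sq_sqrt h3, Real.sqrt_nonneg (1 - 1 / ms)]
  · intro x hx
    have h3 : 0 ≤ 1 - 1 / ms := by
      have : 1 / ms ≤ 1 := by
        rw [div_le_one hms0]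
        exact hms1
      linarith
    have h := key x hx
    have h4 : (Real.sqrt (1 - 1 / ms)) ^ 2 = 1 - 1 / ms := Real.sq_sqrt h3
    nlinarith [norm_nonneg (T x), norm_nonneg x, Real.sqrt_nonneg (1 - 1 / ms),
      mul_nonneg (Real.sqrt_nonneg (1 - 1 / ms)) (norm_nonneg x)]

end TP

section Mueller
variable [CompleteSpace X]

/-- A Müller-type construction: if a linear contraction `A` admits, near every point,
perturbations of prescribed size whose orbit norm at any prescribed time is large,
then the orbit norms can be bounded below by any prescribed null sequence. -/
lemma mueller (V : Submodule ℂ X) (hV : IsClosed (V : Set X)) (A : X →L[ℂ] X)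
    (hA : ∀ y : X, ‖A y‖ ≤ ‖y‖)
    (hE : ∀ n : ℕ, 1 ≤ n → ∀ y : X, ∀ c : ℝ, 0 < c →
      ∃ u, u ∈ V ∧ ‖u‖ ≤ c ∧ 3 / 4 * c ≤ ‖(A ^ n) (y + u)‖)
    (r : ℕ → ℝ) (hr : ∀ n, 0 < r n) (hr0 : Tendsto r atTop (𝓝 0)) :
    ∃ x, x ∈ V ∧ ∀ n, r n ≤ ‖(A ^ n) x‖ := by
  classical
  have hAn : ∀ (n : ℕ) (y : X), ‖(A ^ n) y‖ ≤ ‖y‖ := by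
    intro n
    induction n with
    | zero => intro y; simp
    | succ n ih =>
      intro y
      rw [pow_succ, ContinuousLinearMap.mul_apply]
      exact le_trans (ih (A y)) (hA y)
  have hmono : ∀ {m n : ℕ}, m ≤ n → ∀ y : X, ‖(A ^ n) y‖ ≤ ‖(A ^ m) y‖ := by
    intro m n hmn y
    obtain ⟨k, rfl⟩ := Nat.exists_eq_add_of_le hmn
    rw [show m + k = k + m from Nat.add_comm m k, pow_add, ContinuousLinearMap.mul_apply]
    exact hAn k _
  set c : ℕ → ℝ := fun k => (1 / 4 : ℝ) ^ (k + 1) with hc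
  set γ : ℕ → ℝ := fun k => c k / 3 with hγ
  have hcpos : ∀ k, 0 < c k := fun k => by positivity
  have hγpos : ∀ k, 0 < γ k := fun k => by positivity
  -- thresholds
  have hthr : ∀ k : ℕ, ∃ Nk : ℕ, ∀ n ≥ Nk, r n < γ k := by
    intro k
    obtain ⟨Nk, hNk⟩ := (Metric.tendsto_atTop.1 hr0) (γ k) (hγpos k)
    refine ⟨Nk, fun n hn => ?_⟩
    have := hNk n hn
    rw [Real.dist_eq, sub_zero, abs_of_pos (hr n)] at this
    exact this
  choose thr hthrp using hthr
  -- checkpoints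
  set nav : ℕ → ℕ := fun k =>
    Nat.rec (max (thr 1) 1) (fun k ih => max (thr (k + 2)) (ih + 1)) k with hnav
  have hnav0 : nav 0 = max (thr 1) 1 := rfl
  have hnavsucc : ∀ k, nav (k + 1) = max (thr (k + 2)) (nav k + 1) := fun k => rfl
  have hnavmono : StrictMono nav := by
    refine strictMono_nat_of_lt_succ fun k => ?_
    rw [hnavsucc]
    exact lt_of_lt_of_le (Nat.lt_succ_self _) (le_max_right _ _)
  have hnav1 : ∀ k, 1 ≤ nav k := by
    intro k
    induction k with
    | zero => rw [hnav0]; exact le_max_right _ _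
    | succ k ih => exact le_trans ih (hnavmono (Nat.lt_succ_self k)).le
  have hnavthr : ∀ k, thr (k + 1) ≤ nav k := by
    intro k
    cases k with
    | zero => rw [hnav0]; exact le_max_left _ _
    | succ k => rw [hnavsucc]; exact le_max_left _ _
  -- recursive construction
  choose! u humem hunorm hubig using fun (k : ℕ) (y : X) =>
    hE (nav k) (hnav1 k) y (c k) (hcpos k)
  set g : ℕ → X := fun k =>
    Nat.rec ((0 : X) + u 0 0) (fun k ih => ih + u (k + 1) ih) k with hg
  have hg0 : g 0 = (0 : X) + u 0 0 := rfl
  have hgsucc : ∀ k, g (k + 1) = g k + u (k + 1) (g k) := fun k => rfl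
  have hgmem : ∀ k, g k ∈ V := by
    intro k
    induction k with
    | zero => rw [hg0, zero_add]; exact humem 0 0
    | succ k ih => rw [hgsucc]; exact V.add_mem ih (humem (k + 1) (g k))
  have hgbig : ∀ k, 3 / 4 * c k ≤ ‖(A ^ (nav k)) (g k)‖ := by
    intro k
    cases k with
    | zero => rw [hg0]; exact hubig 0 0
    | succ k => rw [hgsucc]; exact hubig (k + 1) (g k)
  have hgdiff : ∀ k l, k ≤ l → ‖g l - g k‖ ≤ γ k - γ l := by
    intro k l hkl
    induction l with
    | zero =>
      obtain rfl : k = 0 := Nat.le_zero.1 hkl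
      simp
    | succ l ih =>
      rcases Nat.lt_or_ge k (l + 1) with h | h
      · have hkle : k ≤ l := Nat.lt_succ_iff.1 h
        have h1 := ih hkle
        have h2 : ‖g (l + 1) - g l‖ ≤ c (l + 1) := by
          rw [hgsucc]
          simpa using hunorm (l + 1) (g l)
        have h3 : γ l - γ (l + 1) = c (l + 1) := by
          show c l / 3 - c (l + 1) / 3 = c (l + 1)
          have e : c (l + 1) = c l * (1 / 4) := by
            show (1/4 : ℝ) ^ (l + 1 + 1) = (1/4 : ℝ) ^ (l + 1) * (1 / 4)
            ring
          rw [e]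
          ring
        calc ‖g (l + 1) - g k‖ ≤ ‖g (l + 1) - g l‖ + ‖g l - g k‖ := by
              have : g (l + 1) - g k = (g (l + 1) - g l) + (g l - g k) := by abel
              rw [this]; exact norm_add_le _ _
          _ ≤ c (l + 1) + (γ k - γ l) := add_le_add h2 h1
          _ = γ k - γ (l + 1) := by rw [← h3]; ring
      · obtain rfl : k = l + 1 := le_antisymm hkl h
        simp
  have hγ0 : Tendsto γ atTop (𝓝 0) := by
    rw [hγ, hc]
    have h := tendsto_pow_atTop_nhds_zero_of_lt_one (by norm_num : (0:ℝ) ≤ 1/4)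
      (by norm_num : (1/4:ℝ) < 1)
    have h2 := (h.const_mul (1/4 : ℝ)).div_const 3
    simp only [mul_zero, zero_div] at h2
    convert h2 using 2 with k
    ring
  have hcauchy : CauchySeq g := by
    refine cauchySeq_of_le_tendsto_0 (fun k => 2 * γ k) (fun n m K hn hm => ?_) ?_
    · have h1 := hgdiff K n hn
      have h2 := hgdiff K m hm
      have hγn : 0 < γ n := hγpos n
      have hγm : 0 < γ m := hγpos m
      calc dist (g n) (g m) ≤ dist (g n) (g K) + dist (g K) (g m) := dist_triangle _ _ _
        _ = ‖g n - g K‖ + ‖g m - g K‖ := by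
            rw [dist_eq_norm, dist_eq_norm, norm_sub_rev (g K)]
        _ ≤ (γ K - γ n) + (γ K - γ m) := add_le_add h1 h2
        _ ≤ 2 * γ K := by linarith
    · simpa using hγ0.const_mul 2
  obtain ⟨x, hx⟩ := cauchySeq_tendsto_of_complete hcauchy
  have hxV : x ∈ V := hV.mem_of_tendsto hx (Eventually.of_forall hgmem)
  have hxg : ∀ k, ‖x - g k‖ ≤ γ k := by
    intro k
    have h1 : Tendsto (fun l => ‖g l - g k‖) atTop (𝓝 ‖x - g k‖) :=
      ((hx.sub tendsto_const_nhds).norm)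
    refine le_of_tendsto h1 ?_
    filter_upwards [eventually_ge_atTop k] with l hl
    exact le_trans (hgdiff k l hl) (by linarith [hγpos l])
  have hlow : ∀ k, γ k ≤ ‖(A ^ (nav k)) x‖ := by
    intro k
    have h1 : ‖(A ^ (nav k)) (g k)‖ - ‖(A ^ (nav k)) (x - g k)‖ ≤ ‖(A ^ (nav k)) x‖ := by
      have e : (A ^ (nav k)) (g k) = (A ^ (nav k)) x - (A ^ (nav k)) (x - g k) := by
        rw [← map_sub]
        congr 1
        abel
      have h0 : ‖(A ^ (nav k)) (g k)‖ ≤ ‖(A ^ (nav k)) x‖ + ‖(A ^ (nav k)) (x - g k)‖ := by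
        rw [e]
        exact norm_sub_le _ _
      linarith
    have h5 : ‖(A ^ (nav k)) (x - g k)‖ ≤ γ k := le_trans (hAn _ _) (hxg k)
    have h6 := hgbig k
    have h7 : γ k = c k / 3 := rfl
    have hck := hcpos k
    calc γ k = 3 / 4 * c k - c k / 3 - c k * (3/4 - 2/3) := by rw [h7]; ring
      _ ≤ 3 / 4 * c k - γ k - 0 := by
          rw [h7]
          have : 0 ≤ c k * (3/4 - 2/3) := by positivity
          linarith
      _ = 3 / 4 * c k - γ k := by ring
      _ ≤ ‖(A ^ (nav k)) (g k)‖ - ‖(A ^ (nav k)) (x - g k)‖ := by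
          exact sub_le_sub h6 h5
      _ ≤ ‖(A ^ (nav k)) x‖ := h1
  -- scaling
  set B : ℝ := ∑ n ∈ Finset.range (nav 0 + 1), r n with hB
  set lam : ℝ := max 1 (B / γ 0) with hlam
  have hlam1 : (1 : ℝ) ≤ lam := le_max_left _ _
  have hlam0 : (0 : ℝ) < lam := lt_of_lt_of_le one_pos hlam1
  refine ⟨(lam : ℂ) • x, V.smul_mem _ hxV, fun n => ?_⟩
  have hnormsmul : ∀ m : ℕ, ‖(A ^ m) ((lam : ℂ) • x)‖ = lam * ‖(A ^ m) x‖ := by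
    intro m
    rw [map_smul, norm_smul]
    simp [abs_of_pos hlam0]
  rw [hnormsmul n]
  -- find the checkpoint
  have hex : ∃ k, n ≤ nav k := ⟨n, hnavmono.le_apply⟩
  obtain ⟨k, hkn, hmin'⟩ : ∃ k, n ≤ nav k ∧ ∀ j < k, ¬(n ≤ nav j) :=
    ⟨Nat.find hex, Nat.find_spec hex, fun j hj => Nat.find_min hex hj⟩
  have hnormge : γ k ≤ ‖(A ^ n) x‖ := le_trans (hlow k) (hmono hkn x)
  cases Nat.eq_zero_or_pos k with
  | inl hk0 =>
    rw [hk0] at hkn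
    have hrB : r n ≤ B := by
      rw [hB]
      refine Finset.single_le_sum (fun m _ => (hr m).le) ?_
      rw [Finset.mem_range]
      omega
    have hBlam : B ≤ lam * γ 0 := by
      have h1 : B / γ 0 ≤ lam := le_max_right _ _
      calc B = B / γ 0 * γ 0 := (div_mul_cancel₀ B (hγpos 0).ne').symm
        _ ≤ lam * γ 0 := mul_le_mul_of_nonneg_right h1 (hγpos 0).le
    have := hnormge
    rw [hk0] at this
    calc r n ≤ B := hrB
      _ ≤ lam * γ 0 := hBlam
      _ ≤ lam * ‖(A ^ n) x‖ := mul_le_mul_of_nonneg_left this hlam0.le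
  | inr hkpos =>
    obtain ⟨k', rfl⟩ : ∃ k', k = k' + 1 := ⟨k - 1, by omega⟩
    have hmin : ¬ (n ≤ nav k') := hmin' k' (Nat.lt_succ_self k')
    push_neg at hmin
    have hthrn : thr (k' + 1) ≤ n := le_trans (hnavthr k') hmin.le
    have hrn : r n < γ (k' + 1) := hthrp (k' + 1) n hthrn
    calc r n ≤ γ (k' + 1) := hrn.le
      _ ≤ ‖(A ^ n) x‖ := hnormge
      _ = 1 * ‖(A ^ n) x‖ := (one_mul _).symm
      _ ≤ lam * ‖(A ^ n) x‖ := mul_le_mul_of_nonneg_right hlam1 (norm_nonneg _)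

end Mueller

end AltProj

/-- **The dichotomy for the method of alternating projections.** If
`M₁^⊥ + ⋯ + M_N^⊥` is closed then the convergence of `Tⁿ` to `P_M` is exponentially
fast; if it is not closed then the convergence is arbitrarily slow. -/
theorem alternatingProjections_dichotomy
    {X : Type*} [NormedAddCommGroup X] [InnerProductSpace ℂ X] [CompleteSpace X]
    {N : ℕ} (hN : 2 ≤ N) (M : Fin N → Submodule ℂ X) [∀ i, CompleteSpace (M i)]
    [CompleteSpace (⨅ i, M i : Submodule ℂ X)]
    (hMX : (⨅ i, M i : Submodule ℂ X) ≠ ⊤) :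
    (IsClosed ((⨆ i, (M i)ᗮ : Submodule ℂ X) : Set X) →
      ∃ C : ℝ, 0 < C ∧ ∃ r : ℝ, 0 ≤ r ∧ r < 1 ∧ ∀ n : ℕ,
        ‖(cycleProd M N) ^ n - projOnto (⨅ i, M i)‖ ≤ C * r ^ n) ∧
    (¬ IsClosed ((⨆ i, (M i)ᗮ : Submodule ℂ X) : Set X) →
      ∀ r : ℕ → ℝ, (∀ n, 0 < r n) → Tendsto r atTop (𝓝 0) →
        ∃ x : X, ∀ n : ℕ,
          r n ≤ ‖((cycleProd M N) ^ n) x - (projOnto (⨅ i, M i)) x‖) := by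
  constructor
  · -- exponentially fast convergence
    intro hcl
    obtain ⟨r, hr0, hr1, hr⟩ := AltProj.exists_contract_of_isClosed M hcl
    refine ⟨1, one_pos, r, hr0, hr1, fun n => ?_⟩
    rw [one_mul]
    refine ContinuousLinearMap.opNorm_le_bound _ (pow_nonneg hr0 n) fun y => ?_
    have hsub : ((cycleProd M N) ^ n - projOnto (⨅ i, M i)) y
        = ((cycleProd M N) ^ n) (y - projOnto (⨅ i, M i) y) := by
      rw [ContinuousLinearMap.sub_apply, AltProj.Tpow_sub_PM]
    rw [hsub]
    have hbound : ∀ (m : ℕ) (z : X), z ∈ (⨅ i, M i : Submodule ℂ X)ᗮ →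
        ‖((cycleProd M N) ^ m) z‖ ≤ r ^ m * ‖z‖ := by
      intro m
      induction m with
      | zero => intro z _; simp
      | succ m ih =>
        intro z hz
        rw [pow_succ (cycleProd M N), ContinuousLinearMap.mul_apply]
        calc ‖((cycleProd M N) ^ m) (cycleProd M N z)‖
            ≤ r ^ m * ‖cycleProd M N z‖ := ih _ (AltProj.T_mem_orth M hz)
          _ ≤ r ^ m * (r * ‖z‖) :=
              mul_le_mul_of_nonneg_left (hr z hz) (pow_nonneg hr0 m)
          _ = r ^ (m + 1) * ‖z‖ := by ring
    calc ‖((cycleProd M N) ^ n) (y - projOnto (⨅ i, M i) y)‖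
        ≤ r ^ n * ‖y - projOnto (⨅ i, M i) y‖ :=
          hbound n _ (AltProj.sub_projOnto_mem _ y)
      _ ≤ r ^ n * ‖y‖ :=
          mul_le_mul_of_nonneg_left (AltProj.norm_sub_projOnto_le _ y) (pow_nonneg hr0 n)
  · -- arbitrarily slow convergence
    intro hncl r hrpos hrlim
    have hEprop : ∀ n : ℕ, 1 ≤ n → ∀ y : X, ∀ c : ℝ, 0 < c →
        ∃ u, u ∈ (⨅ i, M i : Submodule ℂ X)ᗮ ∧ ‖u‖ ≤ c ∧
          3 / 4 * c ≤ ‖((cycleProd M N) ^ n) (y + u)‖ := by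
      intro n hn y c hc
      have hnotall : ¬ (∀ z ∈ (⨅ i, M i : Submodule ℂ X)ᗮ,
          ‖((cycleProd M N) ^ n) z‖ ≤ 3 / 4 * ‖z‖) := by
        intro hall
        apply hncl
        have hle := AltProj.contract_imp_le_sup M n (3 / 4) (by norm_num) hall
        have hge : (⨆ i, (M i)ᗮ : Submodule ℂ X) ≤ (⨅ i, M i : Submodule ℂ X)ᗮ :=
          iSup_le fun i => Submodule.orthogonal_le (iInf_le M i)
        have heq : (⨆ i, (M i)ᗮ : Submodule ℂ X) = (⨅ i, M i : Submodule ℂ X)ᗮ :=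
          le_antisymm hge hle
        rw [heq]
        exact Submodule.isClosed_orthogonal _
      push_neg at hnotall
      obtain ⟨z, hzV, hzgt⟩ := hnotall
      have hz0 : z ≠ 0 := by
        rintro rfl
        simp at hzgt
      have hzn : (0 : ℝ) < ‖z‖ := norm_pos_iff.2 hz0
      set v : X := ((‖z‖ : ℂ))⁻¹ • z with hv
      have hvV : v ∈ (⨅ i, M i : Submodule ℂ X)ᗮ := Submodule.smul_mem _ _ hzV
      have hvn : ‖v‖ = 1 := by
        rw [hv, norm_smul]
        simp [hzn.ne']
      have hTv : 3 / 4 < ‖((cycleProd M N) ^ n) v‖ := by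
        rw [hv, map_smul, norm_smul]
        have h1 : ‖((‖z‖ : ℂ))⁻¹‖ = ‖z‖⁻¹ := by simp
        rw [h1]
        calc (3 : ℝ) / 4 = ‖z‖⁻¹ * (3 / 4 * ‖z‖) := by field_simp
          _ < ‖z‖⁻¹ * ‖((cycleProd M N) ^ n) z‖ :=
              mul_lt_mul_of_pos_left hzgt (by positivity)
      set u1 : X := (c : ℂ) • v with hu1
      have hu1V : u1 ∈ (⨅ i, M i : Submodule ℂ X)ᗮ := Submodule.smul_mem _ _ hvV
      have hu1n : ‖u1‖ = c := by
        rw [hu1, norm_smul, hvn]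
        simp [abs_of_pos hc]
      have hkey : 3 / 4 * c ≤ ‖((cycleProd M N) ^ n) (y + u1)‖ ∨
          3 / 4 * c ≤ ‖((cycleProd M N) ^ n) (y + -u1)‖ := by
        by_contra hcon
        push_neg at hcon
        obtain ⟨h1, h2⟩ := hcon
        have hdiff : ((cycleProd M N) ^ n) (y + u1) - ((cycleProd M N) ^ n) (y + -u1)
            = (2 : ℂ) • (((cycleProd M N) ^ n) u1) := by
          rw [← map_sub, ← map_smul]
          congr 1
          rw [two_smul]
          abel
        have hlow : (3 : ℝ) / 2 * c < ‖((cycleProd M N) ^ n) (y + u1)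
            - ((cycleProd M N) ^ n) (y + -u1)‖ := by
          rw [hdiff, norm_smul]
          have h2n : ‖(2 : ℂ)‖ = 2 := by simp
          rw [h2n]
          have h3 : ‖((cycleProd M N) ^ n) u1‖ = c * ‖((cycleProd M N) ^ n) v‖ := by
            rw [hu1, map_smul, norm_smul]
            simp [abs_of_pos hc]
          rw [h3]
          nlinarith
        have hup := norm_sub_le (((cycleProd M N) ^ n) (y + u1))
          (((cycleProd M N) ^ n) (y + -u1))
        nlinarith
      rcases hkey with h | h
      · exact ⟨u1, hu1V, le_of_eq hu1n, h⟩
      · refine ⟨-u1, Submodule.neg_mem _ hu1V, ?_, h⟩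
        rw [norm_neg]
        exact le_of_eq hu1n
    obtain ⟨x, hxV, hxlow⟩ := AltProj.mueller ((⨅ i, M i : Submodule ℂ X)ᗮ)
      (Submodule.isClosed_orthogonal _) (cycleProd M N)
      (AltProj.norm_cycleProd_apply_le M N) hEprop r hrpos hrlim
    refine ⟨x, fun n => ?_⟩
    have hPMx : projOnto (⨅ i, M i) x = 0 := AltProj.projOnto_eq_zero _ hxV
    rw [hPMx, sub_zero]
    exact hxlow n
end
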